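/- arXiv:1410.8329 — 4 statements merged into one kernel-verified Lean document; each statement's English description precedes it below -/
import Mathlib

section
/- Let λ be a k-strict partition of length ℓ, let ℓ_k := #{i : λ_i > k}, and let C := {(i,j) : 1 ≤ i < j ≤ ℓ, λ_i + λ_j > 2k + j − i}. For 1 ≤ h ≤ ℓ_k + 1 define b_h := min{ j > ℓ_k : (h,j) ∉ C } and g_h := b_{h−1}, with the convention g_1 := ℓ + 1. Then for all 2 ≤ h ≤ ℓ_k + 1 one has λ_{h−1} − λ_h ≥ g_h − b_h + 1. -/
open scoped Classical

noncomputable section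

/-- The polynomial ring ℤ[c,t]: variables `Sum.inl p` (p ≥ 1) are the `c` variables,
variables `Sum.inr i` (i ≥ 1) are the `t` variables. -/
abbrev P : Type := MvPolynomial (ℕ ⊕ ℕ) ℤ

/-- t_r, with the convention t_r = t_{-r} for r < 0. -/
def tvar (r : ℤ) : P := MvPolynomial.X (Sum.inr r.natAbs)

/-- c_p, with c_0 = 1 and c_p = 0 for p < 0. -/
def cvar (p : ℤ) : P :=
  if p = 0 then 1 else if p < 0 then 0 else MvPolynomial.X (Sum.inl p.toNat)

def negT (i : ℕ) : P := - MvPolynomial.X (Sum.inr i)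

/-- e_j(-t_1,…,-t_m). -/
def esymNT (m j : ℕ) : P :=
  ∑ S ∈ Finset.powersetCard j (Finset.Icc 1 m), ∏ i ∈ S, negT i

/-- h_j(-t_1,…,-t_m). -/
def hsymNT (m j : ℕ) : P :=
  ∑ f ∈ (Finset.Icc 1 m).sym j, (Multiset.map negT (f : Multiset ℕ)).prod

/-- h^r_j(-t): complete homogeneous for r ≥ 0, elementary in |r| variables for r < 0,
and 0 for j < 0. -/
def hNT (r j : ℤ) : P :=
  if j < 0 then 0
  else if 0 ≤ r then hsymNT r.toNat j.toNat
  else esymNT (-r).toNat j.toNat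

/-- c^r_p = Σ_{j=0}^p c_{p-j} h^r_j(-t). -/
def cc (r p : ℤ) : P :=
  ∑ j ∈ Finset.range (p.toNat + 1), cvar (p - j) * hNT r j

/-- c^β_α = Π_i c^{β_i}_{α_i} (sequences are indexed from 1; entry 0 is inert since c^r_0 = 1). -/
def cmon (β α : ℕ → ℤ) : P := ∏ᶠ i, cc (β i) (α i)

/-- The sequence obtained from α by the raising-operator monomial Π_{(i,j)} R_{ij}^{n(i,j)}. -/
def raiseSeq (n : (ℕ × ℕ) →₀ ℕ) (α : ℕ → ℤ) : ℕ → ℤ := fun m =>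
  α m + ∑ p ∈ n.support, (n p : ℤ) * ((if p.1 = m then 1 else 0) - (if p.2 = m then 1 else 0))

/-- Coefficient of R^m in the factor attached to one pair: (1-R) if `a` only,
(1+R)⁻¹ if `b` only, (1-R)(1+R)⁻¹ if both, 1 if neither (only evaluated at m ≥ 1). -/
def pairCoeff (a b : Prop) (m : ℕ) : ℤ :=
  if a then (if b then 2 * (-1 : ℤ)^m else if m ≤ 1 then (-1 : ℤ)^m else 0)
  else (if b then (-1 : ℤ)^m else 0)

def roCoeff (A B : Set (ℕ × ℕ)) (n : (ℕ × ℕ) →₀ ℕ) : ℤ :=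
  ∏ p ∈ n.support, pairCoeff (p ∈ A) (p ∈ B) (n p)

/-- Apply the raising operator expression Π_{p∈A}(1-R_p) · Π_{p∈B}(1+R_p)⁻¹ to c^β_α. -/
def applyRO (A B : Set (ℕ × ℕ)) (β α : ℕ → ℤ) : P :=
  ∑ᶠ n : (ℕ × ℕ) →₀ ℕ, (roCoeff A B n) • cmon β (raiseSeq n α)

/-- The set Δ° of all pairs (i,j) with 1 ≤ i < j. -/
def Upper : Set (ℕ × ℕ) := {p | 1 ≤ p.1 ∧ p.1 < p.2}

/-- A valid set of pairs: a finite order ideal of Δ°. -/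
def ValidPairs (D : Set (ℕ × ℕ)) : Prop :=
  D ⊆ Upper ∧ D.Finite ∧
    ∀ p ∈ D, ∀ q ∈ Upper, q.1 ≤ p.1 → q.2 ≤ p.2 → q ∈ D

/-- a_j(D) = #{i < j : (i,j) ∉ D}. -/
def aD (D : Set (ℕ × ℕ)) (j : ℕ) : ℕ :=
  ((Finset.Ico 1 j).filter (fun i => (i, j) ∉ D)).card

/-- γ_j(D,μ) = k + 1 - μ_j + a_j(D). -/
def gammaSeq (k : ℕ) (D : Set (ℕ × ℕ)) (μ : ℕ → ℤ) (j : ℕ) : ℤ :=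
  (k : ℤ) + 1 - μ j + aD D j

/-- T(D,μ) = R^D c^{γ(D,μ)}_μ, where R^D = Π_{i<j}(1-R_{ij}) Π_{(i,j)∈D}(1+R_{ij})⁻¹. -/
def Tpol (k : ℕ) (D : Set (ℕ × ℕ)) (μ : ℕ → ℤ) : P :=
  applyRO Upper D (gammaSeq k D μ) μ

def FinSupp (α : ℕ → ℤ) : Prop := ∃ N, ∀ m, N ≤ m → α m = 0

/-- Partitions, as integer sequences indexed from 1 (entry 0 is 0). -/
def IsPartition (lam : ℕ → ℤ) : Prop :=
  lam 0 = 0 ∧ (∀ i, 1 ≤ i → 0 ≤ lam i) ∧ (∀ i, 1 ≤ i → lam (i+1) ≤ lam i) ∧ FinSupp lam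

/-- k-strict partitions: parts greater than k are distinct. -/
def IsKStrict (k : ℕ) (lam : ℕ → ℤ) : Prop :=
  IsPartition lam ∧ ∀ i, 1 ≤ i → (k : ℤ) < lam i → lam (i+1) < lam i

/-- C(λ) = {(i,j) : 1 ≤ i < j, λ_i + λ_j > 2k + j - i}. -/
def Cset (k : ℕ) (lam : ℕ → ℤ) : Set (ℕ × ℕ) :=
  {p | 1 ≤ p.1 ∧ p.1 < p.2 ∧ 2*(k:ℤ) + (p.2:ℤ) - (p.1:ℤ) < lam p.1 + lam p.2}

/-- β_j(λ) = k + 1 - λ_j + #{i < j : (i,j) ∉ C(λ)}. -/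
def betaSeq (k : ℕ) (lam : ℕ → ℤ) (j : ℕ) : ℤ :=
  (k : ℤ) + 1 - lam j + ((Finset.Ico 1 j).filter (fun i => (i, j) ∉ Cset k lam)).card

/-- The double theta polynomial Θ_λ(c|t) = R^λ c^{β(λ)}_λ. -/
def Theta (k : ℕ) (lam : ℕ → ℤ) : P :=
  applyRO Upper (Cset k lam) (betaSeq k lam) lam

def zeroSeq : ℕ → ℤ := fun _ => 0

/-- The single theta polynomial Θ_λ(c) = R^λ c_λ. -/
def ThetaSingle (k : ℕ) (lam : ℕ → ℤ) : P :=
  applyRO Upper (Cset k lam) zeroSeq lam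

/-- The ideal generated by I^{(k)} in ℤ[c,t]. -/
def Ik (k : ℕ) : Ideal P :=
  Ideal.span {x | ∃ p : ℕ, k < p ∧
    x = cvar (p:ℤ) * cvar (p:ℤ)
      + 2 * ∑ i ∈ Finset.Icc 1 p, (-1 : P)^i * (cvar ((p : ℤ) + i) * cvar ((p : ℤ) - i))}

/-- ℤ[t] = polynomials in t₁, t₂, …; variable n stands for t_{n+1}. -/
abbrev Zt : Type := MvPolynomial ℕ ℤ

/-- The embedding ℤ[t] → ℤ[c,t]. -/
def tEmbed : Zt →+* P :=
  (MvPolynomial.aeval (fun n : ℕ => (MvPolynomial.X (Sum.inr (n+1)) : P))).toRingHom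

/-- α ↦ α + r·ε_j. -/
def addAt (α : ℕ → ℤ) (j : ℕ) (r : ℤ) : ℕ → ℤ := fun m => α m + if m = j then r else 0

def epsSeq (j : ℕ) : ℕ → ℤ := fun m => if m = j then 1 else 0

/-- The sequence (λ_1,…,λ_{j-1}, r, s, μ_{j+2},…) with prescribed entries r, s at j, j+1. -/
def twoSet (ν : ℕ → ℤ) (j : ℕ) (r s : ℤ) : ℕ → ℤ :=
  fun m => if m = j then r else if m = j+1 then s else ν m

/-- Pairs (i,j) with 1 ≤ i < j ≤ ℓ. -/
def BddPairs (ℓ : ℕ) : Set (ℕ × ℕ) := {p | 1 ≤ p.1 ∧ p.1 < p.2 ∧ p.2 ≤ ℓ}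

/-- Boxes [r,c] and [r',c'] are k-related: |c-k-1| + r = |c'-k-1| + r'. -/
def kRel (k : ℕ) (r c r' c' : ℤ) : Prop :=
  |c - (k:ℤ) - 1| + r = |c' - (k:ℤ) - 1| + r'

/-- Case (i) of λ → μ: μ is obtained from λ by adding a single box (in some row h). -/
def ArrowBox (lam μ : ℕ → ℤ) : Prop :=
  ∃ h : ℕ, 1 ≤ h ∧ ∀ m, μ m = lam m + if m = h then 1 else 0

/-- Case (ii) of λ → μ: remove r boxes from a column c ≤ k of λ (giving ν) and add r+1
boxes to a single row h of ν, so that the removed boxes and the bottom box of μ in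
column c are each k-related to one of the added boxes. -/
def ArrowMove (k : ℕ) (lam μ : ℕ → ℤ) : Prop :=
  ∃ c h r : ℕ, 1 ≤ c ∧ c ≤ k ∧ 1 ≤ h ∧ 1 ≤ r ∧
    ∃ ν : ℕ → ℤ, IsPartition ν ∧
      ∃ S : Finset ℕ, S.card = r ∧
        (∀ x ∈ S, 1 ≤ x ∧ lam x = (c:ℤ) ∧ ν x = (c:ℤ) - 1) ∧
        (∀ x, x ∉ S → ν x = lam x) ∧
        (∀ m, μ m = ν m + if m = h then (r:ℤ) + 1 else 0) ∧
        (∀ x ∈ S, ∃ y : ℤ, ν h + 1 ≤ y ∧ y ≤ ν h + r + 1 ∧ kRel k x c h y) ∧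
        (∀ b : ℕ, 1 ≤ b → (c:ℤ) ≤ μ b → μ (b+1) < (c:ℤ) →
          ∃ y : ℤ, ν h + 1 ≤ y ∧ y ≤ ν h + r + 1 ∧ kRel k b c h y)

/-- λ → μ for k-strict partitions. -/
def ChevArrow (k : ℕ) (lam μ : ℕ → ℤ) : Prop :=
  IsKStrict k μ ∧ (ArrowBox lam μ ∨ ArrowMove k lam μ)

/-- The Chevalley coefficient e_{λμ}: 2 iff μ ⊃ λ with added box neither in column k+1
nor k-related to a bottom box in one of the first k columns of λ; 1 otherwise. -/
def eCoeff (k : ℕ) (lam μ : ℕ → ℤ) : ℤ :=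
  if ∃ h : ℕ, 1 ≤ h ∧ (∀ m, μ m = lam m + if m = h then 1 else 0) ∧
      lam h + 1 ≠ (k:ℤ) + 1 ∧
      ¬ ∃ c x : ℕ, 1 ≤ c ∧ c ≤ k ∧ 1 ≤ x ∧ (c:ℤ) ≤ lam x ∧ lam (x+1) < (c:ℤ) ∧
          kRel k x c h (lam h + 1)
  then 2 else 1

/-- Correspondence between k-strict partitions contained in the (n-k)×(n+k) rectangle and
k-Grassmannian elements of W_n (one-line notation w : ℕ → ℤ on indices 1..n). -/
def GrassCorrespond (k n : ℕ) (w : ℕ → ℤ) (lam : ℕ → ℤ) : Prop :=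
  (∀ m, 1 ≤ m → m ≤ n → 1 ≤ (w m).natAbs ∧ (w m).natAbs ≤ n) ∧
  (∀ m m', 1 ≤ m → m ≤ n → 1 ≤ m' → m' ≤ n → (w m).natAbs = (w m').natAbs → m = m') ∧
  (∀ m, 1 ≤ m → m ≤ k → 0 < w m) ∧
  (∀ m, 1 ≤ m → m + 1 ≤ k → w m < w (m+1)) ∧
  (∀ m, k + 1 ≤ m → m + 1 ≤ n → w m < w (m+1)) ∧
  (∀ i, 1 ≤ i → k + i ≤ n →
    (w (k+i) < 0 → lam i = (k:ℤ) + ((w (k+i)).natAbs : ℤ)) ∧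
    (0 < w (k+i) → lam i = (((Finset.Icc 1 k).filter (fun p => w (k+i) < w p)).card : ℤ))) ∧
  (∀ i, n - k < i → lam i = 0)

/-- The simple reflection s_i acting on the values ±1, …, ±n of signed permutations. -/
def sRefl (i : ℕ) (x : ℤ) : ℤ :=
  if i = 0 then (if x = 1 then -1 else if x = -1 then 1 else x)
  else if x = (i:ℤ) then (i:ℤ)+1
  else if x = (i:ℤ)+1 then (i:ℤ)
  else if x = -(i:ℤ) then -((i:ℤ)+1)
  else if x = -((i:ℤ)+1) then -(i:ℤ)
  else x

/-- Images of the variables under the automorphism s_i of ℤ[c,t]. -/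
def sImage (i : ℕ) : (ℕ ⊕ ℕ) → P
  | Sum.inl p =>
      if i = 0 then
        (if p = 0 then MvPolynomial.X (Sum.inl 0) else
          cvar (p:ℤ) + 2 * ∑ j ∈ Finset.Icc 1 p, (negT 1)^j * cvar ((p:ℤ) - (j:ℤ)))
      else MvPolynomial.X (Sum.inl p)
  | Sum.inr m =>
      if i = 0 then (if m = 1 then negT 1 else MvPolynomial.X (Sum.inr m))
      else if m = i then MvPolynomial.X (Sum.inr (i+1))
      else if m = i+1 then MvPolynomial.X (Sum.inr i)
      else MvPolynomial.X (Sum.inr m)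

/-- The ring endomorphism s_i of ℤ[c,t]. -/
def sAut (i : ℕ) : P →+* P := (MvPolynomial.aeval (sImage i)).toRingHom

/-- Denominator of the divided difference ∂_i: 2t₁ for i = 0, t_{i+1} - t_i for i ≥ 1. -/
def dden (i : ℕ) : P :=
  if i = 0 then 2 * MvPolynomial.X (Sum.inr 1)
  else MvPolynomial.X (Sum.inr (i+1)) - MvPolynomial.X (Sum.inr i)

/-- The divided difference operator ∂_i: the (unique, since P is a domain) quotient
(f - s_i f)/(denominator) whenever the division is exact. -/
def ddiff (i : ℕ) (f : P) : P :=
  if h : ∃ g : P, f - sAut i f = dden i * g then h.choose else 0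

theorem stmt9 (k : ℕ) (lam : ℕ → ℤ) (hlam : IsKStrict k lam) (ℓ ℓk : ℕ)
    (hlen : ∀ i, 1 ≤ i → (lam i ≠ 0 ↔ i ≤ ℓ))
    (hlk : ∀ i, 1 ≤ i → ((k : ℤ) < lam i ↔ i ≤ ℓk))
    (b : ℕ → ℕ)
    (hb : ∀ h, b h = sInf {j : ℕ | ℓk < j ∧ (h, j) ∉ Cset k lam ∩ {p | p.2 ≤ ℓ}}) :
    ∀ h, 2 ≤ h → h ≤ ℓk + 1 → (b (h-1) : ℤ) - (b h : ℤ) + 1 ≤ lam (h-1) - lam h := by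
  obtain ⟨⟨h0, hnn, hmono, hfin⟩, hstrict⟩ := hlam
  have mono : ∀ i j : ℕ, 1 ≤ i → i ≤ j → lam j ≤ lam i := by
    intro i j hi hij
    induction j with
    | zero => omega
    | succ n ih =>
      rcases Nat.lt_or_ge i (n+1) with hlt | hge
      · have hin : i ≤ n := by omega
        exact le_trans (hmono n (by omega)) (ih hin)
      · have : i = n + 1 := by omega
        rw [this]
  intro h h2 hh
  set d : ℤ := lam (h-1) - lam h with hd
  have hh1 : 1 ≤ h - 1 := by omega
  have hkl : (k:ℤ) < lam (h-1) := (hlk (h-1) hh1).2 (by omega)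
  have hdpos : 1 ≤ d := by
    have hs := hstrict (h-1) hh1 hkl
    have he : h - 1 + 1 = h := by omega
    rw [he] at hs
    omega
  have hlkl : ℓk ≤ ℓ := by
    rcases Nat.eq_zero_or_pos ℓk with h0' | hp
    · omega
    · have hgt := (hlk ℓk hp).2 le_rfl
      have hk0 : (0:ℤ) ≤ (k:ℤ) := Int.natCast_nonneg k
      exact (hlen ℓk hp).1 (by omega)
  have hS : ∀ h' : ℕ, ℓ + 1 ∈ {j : ℕ | ℓk < j ∧ (h', j) ∉ Cset k lam ∩ {p | p.2 ≤ ℓ}} := by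
    intro h'
    refine ⟨by omega, fun hc => ?_⟩
    have : ℓ + 1 ≤ ℓ := hc.2
    omega
  have hbmem : ∀ h' : ℕ, ℓk < b h' ∧ (h', b h') ∉ Cset k lam ∩ {p | p.2 ≤ ℓ} := by
    intro h'
    rw [hb h']
    exact Nat.sInf_mem ⟨ℓ + 1, hS h'⟩
  obtain ⟨hbgt, hbnot⟩ := hbmem h
  set j₀ : ℕ := b h + (d - 1).toNat with hj₀
  have hj₀cast : (j₀ : ℤ) = (b h : ℤ) + (d - 1) := by
    have : ((d - 1).toNat : ℤ) = d - 1 := Int.toNat_of_nonneg (by omega)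
    push_cast [hj₀]
    omega
  have hbh : b h + 0 ≤ j₀ := by omega
  have hmem : j₀ ∈ {j : ℕ | ℓk < j ∧ (h - 1, j) ∉ Cset k lam ∩ {p | p.2 ≤ ℓ}} := by
    refine ⟨by omega, fun hc => ?_⟩
    obtain ⟨⟨hc1, hc2, hineq⟩, hle2⟩ := hc
    have hle2' : j₀ ≤ ℓ := hle2
    have hcast : ((h - 1 : ℕ) : ℤ) = (h : ℤ) - 1 := by
      push_cast [Nat.cast_sub (by omega : 1 ≤ h)]
      ring
    rw [hcast] at hineq
    have hlam_eq : lam (h - 1) = lam h + d := by omega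
    have hmlj : lam j₀ ≤ lam (b h) := mono (b h) j₀ (by omega) (by omega)
    rcases Nat.lt_or_ge h (b h) with hlt | hge
    · apply hbnot
      refine ⟨⟨by omega, hlt, ?_⟩, ?_⟩
      · show 2*(k:ℤ) + ((b h : ℕ) : ℤ) - (h : ℤ) < lam h + lam (b h)
        have : 2*(k:ℤ) + (j₀ : ℤ) - ((h:ℤ) - 1) < lam h + d + lam j₀ := by
          rw [← hlam_eq]; exact hineq
        omega
      · show b h ≤ ℓ
        omega
    · have heq : h = b h := by omega
      have hhk : ¬ (k:ℤ) < lam h := by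
        intro hc'
        have := (hlk h (by omega)).1 hc'
        omega
      have hjh : lam j₀ ≤ lam h := mono h j₀ (by omega) (by omega)
      have : 2*(k:ℤ) + (j₀ : ℤ) - ((h:ℤ) - 1) < lam h + d + lam j₀ := by
        rw [← hlam_eq]; exact hineq
      rw [hj₀cast, ← heq] at this
      omega
  have hble : b (h-1) ≤ j₀ := by
    rw [hb (h-1)]
    exact Nat.sInf_le hmem
  have : ((b (h-1) : ℕ) : ℤ) ≤ (j₀ : ℤ) := Int.ofNat_le.mpr hble
  omega

end
end

section
/- Let λ be a k-strict partition of length ℓ and set A_ℓ(λ) := {(i,j) : 1 ≤ i < j ≤ ℓ, λ_i + λ_j ≤ 2k + j − i}. Then in ℤ[c,t]: Θ_λ(c|t) = Σ_{S ⊆ A_ℓ(λ)} Q^{β(λ)}_{ν(S)}(c|t), the sum over all subsets S of A_ℓ(λ), where ν(S) := (Π_{(i,j)∈S} R_{ij}) λ and Q^ρ_α(c|t) := Π_{1≤i<j≤ℓ} (1−R_{ij})(1+R_{ij})^{-1} c^ρ_α. -/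
open scoped Classical

noncomputable section

/-! ### Auxiliary lemmas for stmt13 -/

lemma hNT_zero (r : ℤ) : hNT r 0 = 1 := by
  unfold hNT
  rw [if_neg (by norm_num)]
  split
  · simp only [hsymNT, Int.toNat_zero, Finset.sym_zero, Finset.sum_singleton]
    rfl
  · simp [esymNT]

lemma cvar_neg {p : ℤ} (h : p < 0) : cvar p = 0 := by
  unfold cvar
  rw [if_neg (by omega), if_pos h]

lemma cvar_zero : cvar 0 = 1 := by unfold cvar; simp

lemma cc_zero (r : ℤ) : cc r 0 = 1 := by
  unfold cc
  simp [hNT_zero, cvar_zero]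

lemma cc_neg {r p : ℤ} (h : p < 0) : cc r p = 0 := by
  unfold cc
  have h0 : p.toNat = 0 := Int.toNat_of_nonpos h.le
  rw [h0, zero_add, Finset.range_one, Finset.sum_singleton]
  simp only [Nat.cast_zero, sub_zero, hNT_zero, mul_one]
  exact cvar_neg h

lemma raiseSeq_finsupp (n : (ℕ×ℕ) →₀ ℕ) (α : ℕ → ℤ) (h : FinSupp α) :
    FinSupp (raiseSeq n α) := by
  obtain ⟨N, hN⟩ := h
  refine ⟨max N ((n.support.sup (fun p => max p.1 p.2)) + 1), fun m hm => ?_⟩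
  unfold raiseSeq
  rw [hN m (le_trans (le_max_left _ _) hm), Finset.sum_eq_zero, add_zero]
  intro p hp
  have h1 : max p.1 p.2 ≤ n.support.sup (fun p => max p.1 p.2) :=
    Finset.le_sup (f := fun p => max p.1 p.2) hp
  have h2 := le_trans (le_max_right N _) hm
  have h3 : p.1 ≠ m := by omega
  have h4 : p.2 ≠ m := by omega
  simp [h3, h4]

lemma cmon_eq_zero {β α : ℕ → ℤ} (hfin : FinSupp α) {i : ℕ} (h : α i < 0) :
    cmon β α = 0 := by
  unfold cmon
  apply finprod_eq_zero _ i (by rw [cc_neg h])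
  obtain ⟨N, hN⟩ := hfin
  apply Set.Finite.subset (Finset.range N).finite_toSet
  intro j hj
  simp only [Function.mem_mulSupport] at hj
  simp only [Finset.coe_range, Set.mem_Iio]
  by_contra hc
  exact hj (by rw [hN j (by omega), cc_zero])

/-- the indicator finsupp of a finite set of pairs -/
def indF (S : Finset (ℕ×ℕ)) : (ℕ×ℕ) →₀ ℕ := ∑ p ∈ S, Finsupp.single p 1

lemma indF_apply (S : Finset (ℕ×ℕ)) (q : ℕ×ℕ) :
    indF S q = if q ∈ S then 1 else 0 := by
  unfold indF
  rw [Finset.sum_apply']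
  simp [Finsupp.single_apply]

lemma raiseSeq_eq_sum (n : (ℕ×ℕ) →₀ ℕ) (α : ℕ → ℤ) (T : Finset (ℕ×ℕ))
    (hT : n.support ⊆ T) (m : ℕ) :
    raiseSeq n α m = α m + ∑ p ∈ T,
      (n p : ℤ) * ((if p.1 = m then 1 else 0) - (if p.2 = m then 1 else 0)) := by
  unfold raiseSeq
  congr 1
  exact Finset.sum_subset hT (fun p _ hp => by
    simp [Finsupp.notMem_support_iff.mp hp])

lemma raiseSeq_add_ind (n : (ℕ×ℕ) →₀ ℕ) (S : Finset (ℕ×ℕ)) (α : ℕ → ℤ) :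
    raiseSeq n (fun m => α m + ∑ p ∈ S,
        ((if p.1 = m then (1:ℤ) else 0) - (if p.2 = m then 1 else 0)))
      = raiseSeq (n + indF S) α := by
  funext m
  have hsupp : (n + indF S).support ⊆ n.support ∪ S := by
    intro p hp
    rw [Finsupp.mem_support_iff] at hp
    by_contra hc
    simp only [Finset.mem_union, not_or, Finsupp.mem_support_iff, not_not] at hc
    apply hp
    rw [Finsupp.add_apply, hc.1, indF_apply, if_neg hc.2]
    rfl
  rw [raiseSeq_eq_sum n _ (n.support ∪ S) Finset.subset_union_left m,
      raiseSeq_eq_sum (n + indF S) α (n.support ∪ S) hsupp m]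
  have key : ∀ p ∈ n.support ∪ S, ((n + indF S) p : ℤ) *
      ((if p.1 = m then 1 else 0) - (if p.2 = m then 1 else 0))
      = (n p : ℤ) * ((if p.1 = m then 1 else 0) - (if p.2 = m then 1 else 0))
        + (indF S p : ℤ) * ((if p.1 = m then 1 else 0) - (if p.2 = m then 1 else 0)) := by
    intro p _
    rw [Finsupp.add_apply]
    push_cast
    ring
  rw [Finset.sum_congr rfl key, Finset.sum_add_distrib]
  have hind : ∑ p ∈ n.support ∪ S, (indF S p : ℤ) *
      ((if p.1 = m then 1 else 0) - (if p.2 = m then 1 else 0))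
      = ∑ p ∈ S, ((if p.1 = m then (1:ℤ) else 0) - (if p.2 = m then 1 else 0)) := by
    rw [← Finset.sum_subset Finset.subset_union_right
      (fun p _ hp => by rw [indF_apply, if_neg hp]; simp)]
    apply Finset.sum_congr rfl
    intro p hp
    rw [indF_apply, if_pos hp]
    push_cast; ring
  rw [hind]
  ring

lemma pairCoeff_tt {a b : Prop} (ha : a) (hb : b) (m : ℕ) :
    pairCoeff a b m = 2 * (-1:ℤ)^m := by simp [pairCoeff, ha, hb]

lemma pairCoeff_tf {a b : Prop} (ha : a) (hb : ¬ b) (m : ℕ) :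
    pairCoeff a b m = if m ≤ 1 then (-1:ℤ)^m else 0 := by simp [pairCoeff, ha, hb]

lemma pairCoeff_ff {a b : Prop} (ha : ¬ a) (hb : ¬ b) (m : ℕ) :
    pairCoeff a b m = 0 := by simp [pairCoeff, ha, hb]

lemma roCoeff_eq_prod (A B : Set (ℕ×ℕ)) (n : (ℕ×ℕ) →₀ ℕ) (T : Finset (ℕ×ℕ))
    (hT : n.support ⊆ T) :
    roCoeff A B n = ∏ p ∈ T,
      (if n p = 0 then 1 else pairCoeff (p ∈ A) (p ∈ B) (n p)) := by
  unfold roCoeff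
  have h1 : ∏ p ∈ n.support, pairCoeff (p ∈ A) (p ∈ B) (n p)
      = ∏ p ∈ n.support, (if n p = 0 then 1 else pairCoeff (p ∈ A) (p ∈ B) (n p)) :=
    Finset.prod_congr rfl (fun p hp => by rw [if_neg (Finsupp.mem_support_iff.mp hp)])
  rw [h1]
  exact Finset.prod_subset hT (fun p _ hp => by
    rw [if_pos (Finsupp.notMem_support_iff.mp hp)])

lemma Cset_subset_Upper {k : ℕ} {lam : ℕ → ℤ} {p : ℕ×ℕ} (h : p ∈ Cset k lam) :
    p ∈ Upper := ⟨h.1, h.2.1⟩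

lemma Bdd_subset_Upper {ℓ : ℕ} {p : ℕ×ℕ} (h : p ∈ BddPairs ℓ) : p ∈ Upper :=
  ⟨h.1, h.2.1⟩

lemma roCoeff_supp {ℓ : ℕ} {n : (ℕ×ℕ) →₀ ℕ}
    (h : roCoeff (BddPairs ℓ) (BddPairs ℓ) n ≠ 0) :
    ∀ p ∈ n.support, p ∈ BddPairs ℓ := by
  intro p hp
  by_contra hc
  exact h (Finset.prod_eq_zero hp (pairCoeff_ff hc hc _))
def AfinS (k : ℕ) (lam : ℕ → ℤ) (ℓ : ℕ) : Finset (ℕ×ℕ) :=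
  (Finset.Icc 1 ℓ ×ˢ Finset.Icc 1 ℓ).filter
    (fun p => p.1 < p.2 ∧ lam p.1 + lam p.2 ≤ 2*(k:ℤ) + (p.2:ℤ) - (p.1:ℤ))

lemma AfinS_subset_Bdd {k : ℕ} {lam : ℕ → ℤ} {ℓ : ℕ} {p : ℕ×ℕ}
    (h : p ∈ AfinS k lam ℓ) : p ∈ BddPairs ℓ := by
  simp only [AfinS, Finset.mem_filter, Finset.mem_product, Finset.mem_Icc] at h
  exact ⟨h.1.1.1, h.2.1, h.1.2.2⟩

lemma AfinS_not_Cset {k : ℕ} {lam : ℕ → ℤ} {ℓ : ℕ} {p : ℕ×ℕ}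
    (h : p ∈ AfinS k lam ℓ) : p ∉ Cset k lam := by
  simp only [AfinS, Finset.mem_filter, Finset.mem_product, Finset.mem_Icc] at h
  intro hc
  exact absurd h.2.2 (not_le.mpr hc.2.2)

lemma Bdd_not_Afin_Cset {k : ℕ} {lam : ℕ → ℤ} {ℓ : ℕ} {p : ℕ×ℕ}
    (hB : p ∈ BddPairs ℓ) (hA : p ∉ AfinS k lam ℓ) : p ∈ Cset k lam := by
  obtain ⟨h1, h2, h3⟩ := hB
  refine ⟨h1, h2, ?_⟩
  by_contra hc
  push_neg at hc
  exact hA (by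
    simp only [AfinS, Finset.mem_filter, Finset.mem_product, Finset.mem_Icc]
    exact ⟨⟨⟨h1, by omega⟩, by omega, h3⟩, h2, hc⟩)

lemma sum_delta_eq {ℓ' : ℕ} (a : ℕ) (ha : a ∈ Finset.Icc 1 ℓ') :
    ∑ m ∈ Finset.Icc 1 ℓ', (if a = m then (m:ℤ) else 0) = a := by
  rw [Finset.sum_ite_eq]
  exact if_pos ha

lemma weight_bound {ℓ : ℕ} {lam : ℕ → ℤ} (hpos : ∀ m, 1 ≤ m → 0 ≤ lam m)
    (n : (ℕ×ℕ) →₀ ℕ) (hsupp : ∀ p ∈ n.support, p ∈ BddPairs ℓ)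
    (hnonneg : ∀ m, 0 ≤ raiseSeq n lam m) (p0 : ℕ×ℕ) :
    (n p0 : ℤ) ≤ ∑ m ∈ Finset.Icc 1 ℓ, (m:ℤ) * lam m := by
  have hmem : ∀ p ∈ n.support, p.1 ∈ Finset.Icc 1 ℓ ∧ p.2 ∈ Finset.Icc 1 ℓ := by
    intro p hp
    obtain ⟨h1, h2, h3⟩ := hsupp p hp
    exact ⟨Finset.mem_Icc.mpr ⟨h1, by omega⟩, Finset.mem_Icc.mpr ⟨by omega, h3⟩⟩
  have hid : ∑ m ∈ Finset.Icc 1 ℓ, (m:ℤ) * raiseSeq n lam m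
      = (∑ m ∈ Finset.Icc 1 ℓ, (m:ℤ) * lam m)
        - ∑ p ∈ n.support, (n p : ℤ) * ((p.2:ℤ) - (p.1:ℤ)) := by
    have hexp : ∀ m ∈ Finset.Icc 1 ℓ, (m:ℤ) * raiseSeq n lam m
        = (m:ℤ) * lam m + ∑ p ∈ n.support, (n p : ℤ) *
            ((if p.1 = m then (m:ℤ) else 0) - (if p.2 = m then (m:ℤ) else 0)) := by
      intro m _
      unfold raiseSeq
      rw [mul_add, Finset.mul_sum]
      congr 1
      apply Finset.sum_congr rfl
      intro p _
      split_ifs <;> ring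
    rw [Finset.sum_congr rfl hexp, Finset.sum_add_distrib, Finset.sum_comm]
    congr 1
    rw [← Finset.sum_neg_distrib]
    apply Finset.sum_congr rfl
    intro p hp
    rw [← Finset.mul_sum, Finset.sum_sub_distrib,
        sum_delta_eq p.1 (hmem p hp).1, sum_delta_eq p.2 (hmem p hp).2]
    ring
  have hL : 0 ≤ ∑ m ∈ Finset.Icc 1 ℓ, (m:ℤ) * raiseSeq n lam m :=
    Finset.sum_nonneg (fun m _ => mul_nonneg (by positivity) (hnonneg m))
  have hT : ∀ p ∈ n.support, (0:ℤ) ≤ (n p : ℤ) * ((p.2:ℤ) - (p.1:ℤ)) := by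
    intro p hp
    obtain ⟨h1, h2, h3⟩ := hsupp p hp
    have : (p.1:ℤ) < (p.2:ℤ) := by exact_mod_cast h2
    exact mul_nonneg (by positivity) (by linarith)
  have hsum : ∑ p ∈ n.support, (n p : ℤ) * ((p.2:ℤ) - (p.1:ℤ))
      ≤ ∑ m ∈ Finset.Icc 1 ℓ, (m:ℤ) * lam m := by linarith
  by_cases hp0 : p0 ∈ n.support
  · obtain ⟨h1, h2, h3⟩ := hsupp p0 hp0
    have hc : (p0.1:ℤ) < (p0.2:ℤ) := by exact_mod_cast h2
    have h4 : (n p0 : ℤ) * 1 ≤ (n p0 : ℤ) * ((p0.2:ℤ) - (p0.1:ℤ)) := by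
      apply mul_le_mul_of_nonneg_left (by omega) (by positivity)
    have h5 := Finset.single_le_sum hT hp0
    linarith
  · rw [Finsupp.notMem_support_iff.mp hp0]
    push_cast
    exact Finset.sum_nonneg (fun m hm => mul_nonneg (by positivity)
      (hpos m (Finset.mem_Icc.mp hm).1))
lemma sum_single_apply (S : Finset (ℕ×ℕ)) (c : ℕ) (q : ℕ×ℕ) :
    (∑ p ∈ S, Finsupp.single p c) q = if q ∈ S then c else 0 := by
  rw [Finset.sum_apply']
  simp [Finsupp.single_apply]

lemma cmon_nonneg_of_ne_zero {β : ℕ → ℤ} {lam : ℕ → ℤ} (hfin : FinSupp lam)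
    {n : (ℕ×ℕ) →₀ ℕ} (h : cmon β (raiseSeq n lam) ≠ 0) :
    ∀ m, 0 ≤ raiseSeq n lam m := by
  intro m
  by_contra hc
  exact h (cmon_eq_zero (raiseSeq_finsupp n lam hfin) (not_le.mp hc))

lemma support_finite (β : ℕ → ℤ) (lam : ℕ → ℤ) (ℓ : ℕ)
    (hpos : ∀ m, 1 ≤ m → 0 ≤ lam m) (hfin : FinSupp lam) :
    {n : (ℕ×ℕ) →₀ ℕ | (∀ p ∈ n.support, p ∈ BddPairs ℓ) ∧
      cmon β (raiseSeq n lam) ≠ 0}.Finite := by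
  set W : ℕ := (∑ m ∈ Finset.Icc 1 ℓ, (m:ℤ) * lam m).toNat with hW
  set gmax : (ℕ×ℕ) →₀ ℕ :=
    ∑ p ∈ (Finset.Icc 1 ℓ ×ˢ Finset.Icc 1 ℓ), Finsupp.single p W with hg
  apply Set.Finite.subset (Set.finite_Icc 0 gmax)
  rintro n ⟨h1, h2⟩
  refine ⟨zero_le, Finsupp.le_def.mpr (fun p => ?_)⟩
  by_cases hp : p ∈ n.support
  · have hb := h1 p hp
    have hbd : (n p : ℤ) ≤ ∑ m ∈ Finset.Icc 1 ℓ, (m:ℤ) * lam m :=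
      weight_bound hpos n h1 (cmon_nonneg_of_ne_zero hfin h2) p
    have hmem : p ∈ Finset.Icc 1 ℓ ×ˢ Finset.Icc 1 ℓ := by
      obtain ⟨hb1, hb2, hb3⟩ := hb
      exact Finset.mem_product.mpr ⟨Finset.mem_Icc.mpr ⟨hb1, by omega⟩,
        Finset.mem_Icc.mpr ⟨by omega, hb3⟩⟩
    rw [hg, sum_single_apply, if_pos hmem]
    omega
  · rw [Finsupp.notMem_support_iff.mp hp]
    exact zero_le

lemma cmon_vanish {β lam : ℕ → ℤ} {ℓ : ℕ} (hfin : FinSupp lam)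
    (hlen0 : ∀ i, ℓ < i → lam i = 0) {n : (ℕ×ℕ) →₀ ℕ}
    (hU : ∀ p ∈ n.support, p ∈ Upper) {p1 : ℕ×ℕ} (hp1 : p1 ∈ n.support)
    (hgt : ℓ < p1.2) : cmon β (raiseSeq n lam) = 0 := by
  set j0 := n.support.sup (fun p => p.2) with hj0def
  have hj1 : p1.2 ≤ j0 := Finset.le_sup (f := fun p => p.2) hp1
  obtain ⟨p0, hp0mem, hp0⟩ := Finset.exists_mem_eq_sup n.support ⟨p1, hp1⟩ (fun p => p.2)
  have hneg : raiseSeq n lam j0 < 0 := by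
    unfold raiseSeq
    rw [hlen0 j0 (lt_of_lt_of_le hgt hj1), zero_add]
    have hterm : ∀ p ∈ n.support, (n p : ℤ) *
        ((if p.1 = j0 then 1 else 0) - (if p.2 = j0 then 1 else 0)) ≤ 0 := by
      intro p hp
      have h1 : p.1 ≠ j0 := by
        have h2 := (hU p hp).2
        have h3 : p.2 ≤ j0 := Finset.le_sup (f := fun p => p.2) hp
        omega
      rw [if_neg h1]
      split_ifs
      · simp
      · simp
    rw [← Finset.add_sum_erase _ _ hp0mem]
    have h4 : (n p0 : ℤ) * ((if p0.1 = j0 then 1 else 0) - (if p0.2 = j0 then 1 else 0))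
        ≤ -1 := by
      have h5 : p0.1 ≠ j0 := by
        have h6 := (hU p0 hp0mem).2
        omega
      rw [if_neg h5, if_pos hp0.symm]
      have h7 : 1 ≤ n p0 := Nat.one_le_iff_ne_zero.mpr (Finsupp.mem_support_iff.mp hp0mem)
      have h8 : (1:ℤ) ≤ (n p0 : ℤ) := by exact_mod_cast h7
      nlinarith
    have h9 : ∑ p ∈ n.support.erase p0, (n p : ℤ) *
        ((if p.1 = j0 then 1 else 0) - (if p.2 = j0 then 1 else 0)) ≤ 0 :=
      Finset.sum_nonpos (fun p hp => hterm p (Finset.mem_of_mem_erase hp))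
    linarith
  exact cmon_eq_zero (raiseSeq_finsupp n lam hfin) hneg

lemma perpair (m : ℕ) :
    (if 1 ≤ m then (if m - 1 = 0 then (1:ℤ) else 2 * (-1:ℤ)^(m-1)) else 0)
      + (if m = 0 then 1 else 2 * (-1:ℤ)^m)
    = if m = 0 then 1 else if m ≤ 1 then (-1:ℤ)^m else 0 := by
  match m with
  | 0 => norm_num
  | 1 => norm_num
  | (m+2) =>
    have h1 : ¬ (m + 2 ≤ 1) := by omega
    have h2 : (m + 2) - 1 = m + 1 := by omega
    have h3 : m + 2 ≠ 0 := by omega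
    rw [if_pos (by omega : 1 ≤ m + 2), h2, if_neg (by omega : ¬ m + 1 = 0),
        if_neg h3, if_neg h3, if_neg h1]
    rw [pow_succ]
    ring
lemma coeff_id (k : ℕ) (lam : ℕ → ℤ) (ℓ : ℕ) (n : (ℕ×ℕ) →₀ ℕ)
    (hB : ∀ p ∈ n.support, p ∈ BddPairs ℓ) :
    roCoeff Upper (Cset k lam) n
    = ∑ S ∈ (AfinS k lam ℓ).powerset,
        (if indF S ≤ n then roCoeff (BddPairs ℓ) (BddPairs ℓ) (n - indF S) else 0) := by
  classical
  set A := AfinS k lam ℓ with hA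
  set T := n.support ∪ A with hTdef
  have hsub : n.support ⊆ T := Finset.subset_union_left
  have hAT : A ⊆ T := Finset.subset_union_right
  set u : ℕ×ℕ → ℤ := fun p => if 1 ≤ n p then
      (if n p - 1 = 0 then 1
       else pairCoeff (p ∈ BddPairs ℓ) (p ∈ BddPairs ℓ) (n p - 1)) else 0 with hu
  set v : ℕ×ℕ → ℤ := fun p => if n p = 0 then 1
      else pairCoeff (p ∈ BddPairs ℓ) (p ∈ BddPairs ℓ) (n p) with hv
  have hstep : ∀ S ∈ A.powerset,
      (if indF S ≤ n then roCoeff (BddPairs ℓ) (BddPairs ℓ) (n - indF S) else 0)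
      = (∏ p ∈ S, u p) * ∏ p ∈ T \ S, v p := by
    intro S hS
    have hSA : S ⊆ A := Finset.mem_powerset.mp hS
    have hST : S ⊆ T := hSA.trans hAT
    by_cases hle : indF S ≤ n
    · rw [if_pos hle,
          roCoeff_eq_prod _ _ _ T (Finsupp.support_tsub.trans hsub),
          ← Finset.prod_sdiff hST, mul_comm]
      congr 1
      · apply Finset.prod_congr rfl
        intro p hp
        have h1 : (n - indF S) p = n p - 1 := by
          rw [Finsupp.tsub_apply, indF_apply, if_pos hp]
        have h2 : 1 ≤ n p := by
          have h3 := Finsupp.le_def.mp hle p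
          rwa [indF_apply, if_pos hp] at h3
        rw [h1, hu]
        simp only [if_pos h2]
      · apply Finset.prod_congr rfl
        intro p hp
        have hpS : p ∉ S := (Finset.mem_sdiff.mp hp).2
        have h1 : (n - indF S) p = n p := by
          rw [Finsupp.tsub_apply, indF_apply, if_neg hpS, Nat.sub_zero]
        rw [h1, hv]
    · rw [if_neg hle]
      obtain ⟨p, hp⟩ : ∃ p, ¬ indF S p ≤ n p := by
        by_contra h
        push_neg at h
        exact hle (Finsupp.le_def.mpr (fun i => h i))
      have hpS : p ∈ S := by
        by_contra h
        rw [indF_apply, if_neg h] at hp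
        omega
      have hnp : n p = 0 := by
        rw [indF_apply, if_pos hpS] at hp
        omega
      symm
      apply mul_eq_zero_of_left
      apply Finset.prod_eq_zero hpS
      rw [hu]
      simp [hnp]
  have hfA : ∀ p ∈ A, (if n p = 0 then (1:ℤ)
        else pairCoeff (p ∈ Upper) (p ∈ Cset k lam) (n p)) = u p + v p := by
    intro p hp
    have hBd : p ∈ BddPairs ℓ := AfinS_subset_Bdd hp
    have hUp : p ∈ Upper := Bdd_subset_Upper hBd
    have hC : p ∉ Cset k lam := AfinS_not_Cset hp
    rw [hu, hv]
    simp only [pairCoeff_tf hUp hC, pairCoeff_tt hBd hBd]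
    exact (perpair (n p)).symm
  have hfTA : ∀ p ∈ T \ A, (if n p = 0 then (1:ℤ)
        else pairCoeff (p ∈ Upper) (p ∈ Cset k lam) (n p)) = v p := by
    intro p hp
    obtain ⟨hpT, hpA⟩ := Finset.mem_sdiff.mp hp
    have hpsupp : p ∈ n.support := by
      rcases Finset.mem_union.mp hpT with h | h
      · exact h
      · exact absurd h hpA
    have hBd := hB p hpsupp
    have hC : p ∈ Cset k lam := Bdd_not_Afin_Cset hBd hpA
    rw [hv]
    simp only [pairCoeff_tt (Bdd_subset_Upper hBd) hC, pairCoeff_tt hBd hBd]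
  calc roCoeff Upper (Cset k lam) n
      = ∏ p ∈ T, (if n p = 0 then 1
          else pairCoeff (p ∈ Upper) (p ∈ Cset k lam) (n p)) :=
        roCoeff_eq_prod _ _ n T hsub
    _ = (∏ p ∈ A, (if n p = 0 then 1
          else pairCoeff (p ∈ Upper) (p ∈ Cset k lam) (n p)))
        * ∏ p ∈ T \ A, (if n p = 0 then 1
          else pairCoeff (p ∈ Upper) (p ∈ Cset k lam) (n p)) := by
        rw [← Finset.prod_union Finset.disjoint_sdiff,
            Finset.union_sdiff_of_subset hAT]
    _ = (∏ p ∈ A, (u p + v p)) * ∏ p ∈ T \ A, v p := by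
        rw [Finset.prod_congr rfl hfA, Finset.prod_congr rfl hfTA]
    _ = (∑ S ∈ A.powerset, (∏ p ∈ S, u p) * ∏ p ∈ A \ S, v p)
        * ∏ p ∈ T \ A, v p := by rw [Finset.prod_add]
    _ = ∑ S ∈ A.powerset,
          ((∏ p ∈ S, u p) * ∏ p ∈ A \ S, v p) * ∏ p ∈ T \ A, v p := by
        rw [Finset.sum_mul]
    _ = ∑ S ∈ A.powerset,
          (if indF S ≤ n then roCoeff (BddPairs ℓ) (BddPairs ℓ) (n - indF S) else 0) := by
        apply Finset.sum_congr rfl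
        intro S hS
        have hSA : S ⊆ A := Finset.mem_powerset.mp hS
        have hTS : T \ S = (A \ S) ∪ (T \ A) := by
          ext x
          simp only [Finset.mem_sdiff, Finset.mem_union]
          constructor
          · rintro ⟨hxT, hxS⟩
            by_cases hxA : x ∈ A
            · exact Or.inl ⟨hxA, hxS⟩
            · exact Or.inr ⟨hxT, hxA⟩
          · rintro (⟨hxA, hxS⟩ | ⟨hxT, hxA⟩)
            · exact ⟨hAT hxA, hxS⟩
            · exact ⟨hxT, fun hxS => hxA (hSA hxS)⟩
        have hdisj : Disjoint (A \ S) (T \ A) := by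
          rw [Finset.disjoint_left]
          rintro x hx1 hx2
          exact (Finset.mem_sdiff.mp hx2).2 (Finset.mem_sdiff.mp hx1).1
        rw [hstep S hS, hTS, Finset.prod_union hdisj, mul_assoc]
lemma pointwise_id (k : ℕ) (lam : ℕ → ℤ) (ℓ : ℕ) (hlam : IsKStrict k lam)
    (hlen : ∀ i, 1 ≤ i → (lam i ≠ 0 ↔ i ≤ ℓ)) (n : (ℕ×ℕ) →₀ ℕ) :
    roCoeff Upper (Cset k lam) n • cmon (betaSeq k lam) (raiseSeq n lam)
    = ∑ S ∈ (AfinS k lam ℓ).powerset,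
        (if indF S ≤ n then roCoeff (BddPairs ℓ) (BddPairs ℓ) (n - indF S) else 0)
          • cmon (betaSeq k lam) (raiseSeq n lam) := by
  rw [← Finset.sum_smul]
  by_cases hcm : cmon (betaSeq k lam) (raiseSeq n lam) = 0
  · rw [hcm, smul_zero, smul_zero]
  by_cases hU : ∀ p ∈ n.support, p ∈ Upper
  · have hlen0 : ∀ i, ℓ < i → lam i = 0 := by
      intro i hi
      by_contra h
      exact absurd ((hlen i (by omega)).mp h) (by omega)
    have hBdd : ∀ p ∈ n.support, p ∈ BddPairs ℓ := by
      intro p hp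
      by_contra hc
      have hUp := hU p hp
      have hgt : ℓ < p.2 := by
        by_contra hg
        exact hc ⟨hUp.1, hUp.2, not_lt.mp hg⟩
      exact hcm (cmon_vanish hlam.1.2.2.2 hlen0 hU hp hgt)
    rw [coeff_id k lam ℓ n hBdd]
  · push_neg at hU
    obtain ⟨p, hp, hpU⟩ := hU
    have hL : roCoeff Upper (Cset k lam) n = 0 :=
      Finset.prod_eq_zero hp
        (pairCoeff_ff hpU (fun hc => hpU (Cset_subset_Upper hc)) _)
    have hR : ∀ S ∈ (AfinS k lam ℓ).powerset,
        (if indF S ≤ n then roCoeff (BddPairs ℓ) (BddPairs ℓ) (n - indF S) else 0)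
          = 0 := by
      intro S hS
      split_ifs with h
      · have hpS : p ∉ S := fun hmem =>
          hpU (Bdd_subset_Upper (AfinS_subset_Bdd (Finset.mem_powerset.mp hS hmem)))
        have hpsupp : p ∈ (n - indF S).support := by
          rw [Finsupp.mem_support_iff, Finsupp.tsub_apply, indF_apply, if_neg hpS,
              Nat.sub_zero]
          exact Finsupp.mem_support_iff.mp hp
        exact Finset.prod_eq_zero hpsupp
          (pairCoeff_ff (fun hc => hpU (Bdd_subset_Upper hc))
            (fun hc => hpU (Bdd_subset_Upper hc)) _)
      · rfl
    rw [hL, Finset.sum_eq_zero hR]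
theorem stmt13 (k : ℕ) (lam : ℕ → ℤ) (hlam : IsKStrict k lam) (ℓ : ℕ)
    (hlen : ∀ i, 1 ≤ i → (lam i ≠ 0 ↔ i ≤ ℓ)) :
    Theta k lam =
      ∑ S ∈ ((Finset.Icc 1 ℓ ×ˢ Finset.Icc 1 ℓ).filter
          (fun p => p.1 < p.2 ∧ lam p.1 + lam p.2 ≤ 2*(k:ℤ) + (p.2:ℤ) - (p.1:ℤ))).powerset,
        applyRO (BddPairs ℓ) (BddPairs ℓ) (betaSeq k lam)
          (fun m => lam m + ∑ p ∈ S, ((if p.1 = m then 1 else 0) - (if p.2 = m then 1 else 0))) := by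
  classical
  have hfin : FinSupp lam := hlam.1.2.2.2
  have hpos : ∀ m, 1 ≤ m → 0 ≤ lam m := hlam.1.2.1
  have hAeq : ((Finset.Icc 1 ℓ ×ˢ Finset.Icc 1 ℓ).filter
      (fun p => p.1 < p.2 ∧ lam p.1 + lam p.2 ≤ 2*(k:ℤ) + (p.2:ℤ) - (p.1:ℤ)))
      = AfinS k lam ℓ := rfl
  rw [hAeq]
  have hterm : ∀ S ∈ (AfinS k lam ℓ).powerset,
      applyRO (BddPairs ℓ) (BddPairs ℓ) (betaSeq k lam)
        (fun m => lam m + ∑ p ∈ S,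
          ((if p.1 = m then 1 else 0) - (if p.2 = m then 1 else 0)))
      = ∑ᶠ n : (ℕ×ℕ) →₀ ℕ,
          (if indF S ≤ n then roCoeff (BddPairs ℓ) (BddPairs ℓ) (n - indF S) else 0)
            • cmon (betaSeq k lam) (raiseSeq n lam) := by
    intro S _
    unfold applyRO
    have h1 : ∀ n : (ℕ×ℕ) →₀ ℕ,
        roCoeff (BddPairs ℓ) (BddPairs ℓ) n • cmon (betaSeq k lam)
          (raiseSeq n (fun m => lam m + ∑ p ∈ S,
            ((if p.1 = m then (1:ℤ) else 0) - (if p.2 = m then 1 else 0))))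
        = roCoeff (BddPairs ℓ) (BddPairs ℓ) n
            • cmon (betaSeq k lam) (raiseSeq (n + indF S) lam) := by
      intro n; rw [raiseSeq_add_ind]
    rw [finsum_congr h1]
    set f : ((ℕ×ℕ) →₀ ℕ) → P := fun y =>
      (if indF S ≤ y then roCoeff (BddPairs ℓ) (BddPairs ℓ) (y - indF S) else 0)
        • cmon (betaSeq k lam) (raiseSeq y lam) with hf
    have hinj : Function.Injective (fun n : (ℕ×ℕ) →₀ ℕ => n + indF S) :=
      add_left_injective _
    have h2 : ∀ n : (ℕ×ℕ) →₀ ℕ,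
        roCoeff (BddPairs ℓ) (BddPairs ℓ) n
            • cmon (betaSeq k lam) (raiseSeq (n + indF S) lam)
        = f ((fun n => n + indF S) n) := by
      intro n
      rw [hf]
      simp only
      rw [if_pos le_add_self, add_tsub_cancel_right]
    rw [finsum_congr h2, ← finsum_mem_range hinj, finsum_mem_def]
    apply finsum_congr
    intro y
    by_cases hy : indF S ≤ y
    · rw [Set.indicator_of_mem (show y ∈ Set.range (fun n : (ℕ×ℕ) →₀ ℕ => n + indF S)
          from ⟨y - indF S, tsub_add_cancel_of_le hy⟩)]
    · rw [Set.indicator_of_notMem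
          (show y ∉ Set.range (fun n : (ℕ×ℕ) →₀ ℕ => n + indF S) by
            rintro ⟨m, hm⟩; exact hy (hm ▸ le_add_self))]
      rw [hf]
      simp only
      rw [if_neg hy, zero_smul]
  rw [Finset.sum_congr rfl hterm]
  have hcond : ∀ S ∈ (AfinS k lam ℓ).powerset,
      (Function.support fun n : (ℕ×ℕ) →₀ ℕ =>
        (if indF S ≤ n then roCoeff (BddPairs ℓ) (BddPairs ℓ) (n - indF S) else 0)
          • cmon (betaSeq k lam) (raiseSeq n lam)).Finite := by
    intro S hS
    apply Set.Finite.subset (support_finite (betaSeq k lam) lam ℓ hpos hfin)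
    intro n hn
    simp only [Function.mem_support] at hn
    have h1 : indF S ≤ n := by
      by_contra h
      exact hn (by rw [if_neg h, zero_smul])
    have h2 : roCoeff (BddPairs ℓ) (BddPairs ℓ) (n - indF S) ≠ 0 := by
      intro h0
      exact hn (by rw [if_pos h1, h0, zero_smul])
    have h3 : cmon (betaSeq k lam) (raiseSeq n lam) ≠ 0 := by
      intro h0
      exact hn (by rw [h0, smul_zero])
    refine ⟨?_, h3⟩
    intro p hp
    by_cases hpS : p ∈ S
    · exact AfinS_subset_Bdd (Finset.mem_powerset.mp hS hpS)
    · apply roCoeff_supp h2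
      rw [Finsupp.mem_support_iff, Finsupp.tsub_apply, indF_apply, if_neg hpS,
          Nat.sub_zero]
      exact Finsupp.mem_support_iff.mp hp
  rw [← finsum_sum_comm _ _ hcond]
  unfold Theta applyRO
  apply finsum_congr
  intro n
  exact pointwise_id k lam ℓ hlam hlen n

end
end

section
/- For all integers p, r and all i ≥ 0, the automorphism s_i of ℤ[c,t] satisfies: s_i(c^r_p) = c^r_p if r ≠ ±i; s_i(c^r_p) = c^{i+1}_p + t_i · c^{i+1}_{p−1} if r = i > 0; and s_i(c^r_p) = c^{−i+1}_p − t_{i+1} · c^{−i+1}_{p−1} if r = −i ≤ 0 (in particular s_0(c^0_p) = c^1_p − t_1 c^1_{p−1}). -/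
open scoped Classical

noncomputable section

section Aux

lemma sym_split {s : Finset ℕ} {a : ℕ} (ha : a ∉ s) (n : ℕ) (F : ℕ → P) :
    ∑ f ∈ (insert a s).sym (n+1), (Multiset.map F (f : Multiset ℕ)).prod
      = ∑ f ∈ s.sym (n+1), (Multiset.map F (f : Multiset ℕ)).prod
        + F a * ∑ f ∈ (insert a s).sym n, (Multiset.map F (f : Multiset ℕ)).prod := by
  classical
  rw [← Finset.sum_filter_add_sum_filter_not ((insert a s).sym (n+1)) (fun f => a ∈ f)]
  rw [add_comm]
  congr 1
  · apply Finset.sum_congr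
    · ext f
      simp only [Finset.mem_filter, Finset.mem_sym_iff, Finset.mem_insert]
      constructor
      · rintro ⟨h1, h2⟩ b hb
        rcases h1 b hb with rfl | h
        · exact absurd hb h2
        · exact h
      · intro h
        exact ⟨fun b hb => Or.inr (h b hb), fun hf => ha (h a hf)⟩
    · intros; rfl
  · rw [Finset.mul_sum]
    refine Finset.sum_bij' (fun f hf => f.erase a (Finset.mem_filter.mp hf).2)
      (fun g _ => a ::ₛ g) ?_ ?_ ?_ ?_ ?_
    · intro f hf
      rw [Finset.mem_sym_iff]
      intro b hb
      have hf' := (Finset.mem_filter.mp hf).1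
      rw [Finset.mem_sym_iff] at hf'
      apply hf'
      have : b ∈ (f.erase a (Finset.mem_filter.mp hf).2 : Multiset ℕ) := hb
      rw [Sym.coe_erase] at this
      exact Multiset.mem_of_mem_erase this
    · intro g hg
      rw [Finset.mem_filter]
      refine ⟨?_, Sym.mem_cons_self a g⟩
      rw [Finset.mem_sym_iff] at hg ⊢
      intro b hb
      rcases Sym.mem_cons.mp hb with h | h
      · rw [h]; exact Finset.mem_insert_self a s
      · exact hg b h
    · intro f hf
      exact Sym.cons_erase _
    · intro g hg
      exact Sym.erase_cons_head g a _
    · intro f hf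
      have : f = a ::ₛ f.erase a (Finset.mem_filter.mp hf).2 := (Sym.cons_erase _).symm
      conv_lhs => rw [this]
      rw [Sym.coe_cons, Multiset.map_cons, Multiset.prod_cons]

lemma pows_split {s : Finset ℕ} {a : ℕ} (ha : a ∉ s) (n : ℕ) (F : ℕ → P) :
    ∑ S ∈ Finset.powersetCard (n+1) (insert a s), ∏ i ∈ S, F i
      = ∑ S ∈ Finset.powersetCard (n+1) s, ∏ i ∈ S, F i
        + F a * ∑ S ∈ Finset.powersetCard n s, ∏ i ∈ S, F i := by
  classical
  rw [Finset.powersetCard_succ_insert ha, Finset.sum_union, Finset.mul_sum,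
    Finset.sum_image]
  · congr 1
    apply Finset.sum_congr rfl
    intro S hS
    rw [Finset.mem_powersetCard] at hS
    rw [Finset.prod_insert (fun h => ha (hS.1 h))]
  · intro S hS T hT hST
    rw [Finset.mem_coe, Finset.mem_powersetCard] at hS hT
    have haS : a ∉ S := fun h => ha (hS.1 h)
    have haT : a ∉ T := fun h => ha (hT.1 h)
    rw [← Finset.erase_insert haS, ← Finset.erase_insert haT, hST]
  · rw [Finset.disjoint_left]
    intro S hS hS'
    rw [Finset.mem_powersetCard] at hS
    rw [Finset.mem_image] at hS'
    obtain ⟨T, hT, rfl⟩ := hS'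
    rw [Finset.mem_powersetCard] at hT
    exact ha (hS.1 (Finset.mem_insert_self a T))

lemma Icc_one_succ (m : ℕ) : Finset.Icc 1 (m+1) = insert (m+1) (Finset.Icc 1 m) := by
  ext x; simp only [Finset.mem_Icc, Finset.mem_insert]; omega

lemma mp1_not_mem (m : ℕ) : m + 1 ∉ Finset.Icc 1 m := by simp

lemma hsymNT_zero (m : ℕ) : hsymNT m 0 = 1 := by
  simp [hsymNT, Finset.sym_zero]
  rfl

lemma esymNT_zero (m : ℕ) : esymNT m 0 = 1 := by
  simp [esymNT]

lemma hsymNT_zero_vars (j : ℕ) (hj : j ≠ 0) : hsymNT 0 j = 0 := by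
  obtain ⟨j, rfl⟩ := Nat.exists_eq_succ_of_ne_zero hj
  simp [hsymNT, Finset.Icc_self, Finset.sym_empty]

lemma esymNT_zero_vars (j : ℕ) (hj : j ≠ 0) : esymNT 0 j = 0 := by
  obtain ⟨j, rfl⟩ := Nat.exists_eq_succ_of_ne_zero hj
  have h0 : Finset.powersetCard (j+1) (Finset.Icc 1 0) = ∅ := by
    rw [Finset.powersetCard_eq_empty]; simp
  unfold esymNT
  rw [h0, Finset.sum_empty]

lemma hsymNT_rec (m j : ℕ) :
    hsymNT (m+1) (j+1) = hsymNT m (j+1) + negT (m+1) * hsymNT (m+1) j := by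
  unfold hsymNT
  rw [Icc_one_succ, sym_split (mp1_not_mem m)]

lemma esymNT_rec (m j : ℕ) :
    esymNT (m+1) (j+1) = esymNT m (j+1) + negT (m+1) * esymNT m j := by
  unfold esymNT
  rw [Icc_one_succ, pows_split (mp1_not_mem m)]

end Aux
section PSaux
open PowerSeries

def Tv (m : ℕ) : P := MvPolynomial.X (Sum.inr m)

noncomputable def Cv : PowerSeries P := PowerSeries.mk fun n => cvar n
noncomputable def Hps (r : ℤ) : PowerSeries P := PowerSeries.mk fun n => hNT r n
noncomputable def Cps (r : ℤ) : PowerSeries P := PowerSeries.mk fun n => cc r n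
noncomputable def uu (m : ℕ) : PowerSeries P := 1 + PowerSeries.C (Tv m) * PowerSeries.X
noncomputable def vv (m : ℕ) : PowerSeries P := 1 - PowerSeries.C (Tv m) * PowerSeries.X

lemma coeff_mul_uu_zero (m : ℕ) (f : PowerSeries P) :
    coeff 0 (f * uu m) = coeff 0 f := by
  have : f * uu m = f + C (Tv m) * f * X := by rw [uu]; ring
  rw [this, map_add, coeff_zero_mul_X, add_zero]

lemma coeff_mul_uu_succ (m n : ℕ) (f : PowerSeries P) :
    coeff (n+1) (f * uu m) = coeff (n+1) f + Tv m * coeff n f := by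
  have : f * uu m = f + C (Tv m) * f * X := by rw [uu]; ring
  rw [this, map_add, coeff_succ_mul_X, coeff_C_mul]

lemma coeff_mul_vv_zero (m : ℕ) (f : PowerSeries P) :
    coeff 0 (f * vv m) = coeff 0 f := by
  have : f * vv m = f - C (Tv m) * f * X := by rw [vv]; ring
  rw [this, map_sub, coeff_zero_mul_X, sub_zero]

lemma coeff_mul_vv_succ (m n : ℕ) (f : PowerSeries P) :
    coeff (n+1) (f * vv m) = coeff (n+1) f - Tv m * coeff n f := by
  have : f * vv m = f - C (Tv m) * f * X := by rw [vv]; ring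
  rw [this, map_sub, coeff_succ_mul_X, coeff_C_mul]

lemma negT_eq (m : ℕ) : negT m = - Tv m := rfl

lemma hNT_nonneg (m n : ℕ) : hNT (m:ℤ) n = hsymNT m n := by
  rw [hNT, if_neg (by omega), if_pos (by omega)]
  norm_num

lemma hNT_neg (m n : ℕ) : hNT (-(m:ℤ)) n = esymNT m n := by
  rcases Nat.eq_zero_or_pos m with rfl | hm
  · rw [hNT, if_neg (by omega), if_pos (by omega)]
    cases n with
    | zero => simp [hsymNT_zero, esymNT_zero]
    | succ n => simp [hsymNT_zero_vars n.succ n.succ_ne_zero,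
        esymNT_zero_vars n.succ n.succ_ne_zero]
  · rw [hNT, if_neg (by omega), if_neg (by omega)]
    congr 1 <;> omega

lemma Hps_zero : Hps 0 = 1 := by
  ext n
  rw [Hps, coeff_mk, show (0:ℤ) = -(0:ℕ) by norm_num, hNT_neg, PowerSeries.coeff_one]
  cases n with
  | zero => simp [esymNT_zero]
  | succ n => simp [esymNT_zero_vars n.succ n.succ_ne_zero]

lemma Hps_rec_pos (m : ℕ) : Hps ((m:ℤ)+1) * uu (m+1) = Hps (m:ℤ) := by
  ext n
  have e1 : ((m:ℤ)+1) = ((m+1 : ℕ) : ℤ) := by push_cast; ring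
  cases n with
  | zero =>
      rw [coeff_mul_uu_zero, Hps, Hps, coeff_mk, coeff_mk, e1, hNT_nonneg, hNT_nonneg,
        hsymNT_zero, hsymNT_zero]
  | succ n =>
      rw [coeff_mul_uu_succ, Hps, Hps, coeff_mk, coeff_mk, coeff_mk, e1,
        hNT_nonneg, hNT_nonneg, hNT_nonneg, hsymNT_rec, negT_eq]
      ring

lemma Hps_rec_neg (m : ℕ) : Hps (-(m:ℤ)) * vv (m+1) = Hps (-(m:ℤ)-1) := by
  ext n
  have e1 : (-(m:ℤ)-1) = -((m+1 : ℕ) : ℤ) := by push_cast; ring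
  cases n with
  | zero =>
      rw [coeff_mul_vv_zero, Hps, Hps, coeff_mk, coeff_mk, e1, hNT_neg, hNT_neg,
        esymNT_zero, esymNT_zero]
  | succ n =>
      rw [coeff_mul_vv_succ, Hps, Hps, coeff_mk, coeff_mk, coeff_mk, e1,
        hNT_neg, hNT_neg, hNT_neg, esymNT_rec, negT_eq]
      ring

lemma Cps_eq (r : ℤ) : Cps r = Cv * Hps r := by
  refine PowerSeries.ext fun n => ?_
  rw [Cps, coeff_mk, PowerSeries.coeff_mul, Finset.Nat.sum_antidiagonal_eq_sum_range_succ_mk]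
  simp only [Cv, Hps, coeff_mk]
  rw [cc, Int.toNat_natCast]
  rw [← Finset.sum_range_reflect]
  apply Finset.sum_congr rfl
  intro j hj
  rw [Finset.mem_range] at hj
  have e1 : ((n:ℤ)) - ((n + 1 - 1 - j : ℕ):ℤ) = (j:ℤ) := by omega
  have e2 : ((n + 1 - 1 - j : ℕ):ℤ) = ((n - j : ℕ):ℤ) := by omega
  rw [e1, e2]

noncomputable def Pu (m : ℕ) : PowerSeries P := ∏ l ∈ Finset.range m, uu (l+1)
noncomputable def Pv (m : ℕ) : PowerSeries P := ∏ l ∈ Finset.range m, vv (l+1)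

lemma Hps_mul_Pu (m : ℕ) : Hps (m:ℤ) * Pu m = 1 := by
  induction m with
  | zero => rw [Pu, Finset.range_zero, Finset.prod_empty, mul_one, Nat.cast_zero, Hps_zero]
  | succ m ih =>
      have hP : Pu (m+1) = uu (m+1) * Pu m := by
        rw [Pu, Pu, Finset.prod_range_succ, mul_comm]
      rw [hP, show ((m+1:ℕ):ℤ) = (m:ℤ)+1 by push_cast; ring, ← mul_assoc,
        Hps_rec_pos, ih]

lemma Hps_neg_eq (m : ℕ) : Hps (-(m:ℤ)) = Pv m := by
  induction m with
  | zero => rw [Pv, Finset.range_zero, Finset.prod_empty, Nat.cast_zero, neg_zero, Hps_zero]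
  | succ m ih =>
      rw [Pv, Finset.prod_range_succ, ← Pv, ← ih, Hps_rec_neg,
        show -((m+1:ℕ):ℤ) = -(m:ℤ)-1 by push_cast; ring]

end PSaux
section SAutLemmas
open PowerSeries

lemma sAut_X (i : ℕ) (x : ℕ ⊕ ℕ) : sAut i (MvPolynomial.X x) = sImage i x := by
  simp [sAut, MvPolynomial.aeval_X]

lemma sAut_Tv_self (i : ℕ) (hi : 0 < i) : sAut i (Tv i) = Tv (i+1) := by
  rw [Tv, sAut_X, sImage, if_neg (by omega), if_pos rfl]
  rfl

lemma sAut_Tv_succ (i : ℕ) (hi : 0 < i) : sAut i (Tv (i+1)) = Tv i := by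
  rw [Tv, sAut_X, sImage, if_neg (by omega), if_neg (by omega), if_pos rfl]
  rfl

lemma sAut_Tv_other (i m : ℕ) (hi : 0 < i) (h1 : m ≠ i) (h2 : m ≠ i+1) :
    sAut i (Tv m) = Tv m := by
  rw [Tv, sAut_X, sImage, if_neg (by omega), if_neg h1, if_neg h2]

lemma sAut0_Tv_one : sAut 0 (Tv 1) = - Tv 1 := by
  rw [Tv, sAut_X, sImage, if_pos rfl, if_pos rfl]
  rfl

lemma sAut0_Tv_other (m : ℕ) (hm : m ≠ 1) : sAut 0 (Tv m) = Tv m := by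
  rw [Tv, sAut_X, sImage, if_pos rfl, if_neg hm]

lemma sAut_cvar (i : ℕ) (hi : 0 < i) (p : ℤ) : sAut i (cvar p) = cvar p := by
  rw [cvar]
  split_ifs with h1 h2
  · exact map_one _
  · exact map_zero _
  · rw [sAut_X, sImage, if_neg (by omega)]

lemma sAut0_cvar (n : ℤ) : sAut 0 (cvar n) =
    cvar n + 2 * ∑ j ∈ Finset.Icc 1 n.toNat, negT 1 ^ j * cvar (n - j) := by
  rcases lt_trichotomy n 0 with h | rfl | h
  · have : n.toNat = 0 := by omega
    rw [this, cvar, if_neg (by omega), if_pos h, map_zero]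
    simp
  · rw [cvar, if_pos rfl, map_one]
    simp
  · have h0 : n ≠ 0 := by omega
    have hlt : ¬ n < 0 := by omega
    rw [cvar, if_neg h0, if_neg hlt, sAut_X, sImage, if_pos rfl,
      if_neg (by omega)]
    have e0 : ((n.toNat:ℤ)) = n := by omega
    rw [cvar, if_neg (by omega), if_neg (by omega), e0]

end SAutLemmas
section MapLemmas
open PowerSeries

noncomputable def Sfun (n : ℕ) : P :=
  ∑ j ∈ Finset.range n, negT 1 ^ (j+1) * cvar ((n:ℤ) - (j+1))

lemma sAut0_cvar_nat (n : ℕ) : sAut 0 (cvar (n:ℤ)) = cvar (n:ℤ) + 2 * Sfun n := by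
  rw [sAut0_cvar, Sfun, Int.toNat_natCast]
  congr 2
  rw [← Finset.Ico_add_one_right_eq_Icc, Finset.sum_Ico_eq_sum_range]
  have hn : n + 1 - 1 = n := rfl
  rw [hn]
  apply Finset.sum_congr rfl
  intro j _
  have e1 : 1 + j = j + 1 := by omega
  rw [e1]
  norm_num

lemma Sfun_succ (n : ℕ) : Sfun (n+1) = negT 1 * cvar (n:ℤ) + negT 1 * Sfun n := by
  have hsum : ∀ j ∈ Finset.range n,
      negT 1 ^ (j+1+1) * cvar (((n+1:ℕ):ℤ) - (((j+1:ℕ):ℤ)+1))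
        = negT 1 * (negT 1 ^ (j+1) * cvar ((n:ℤ) - ((j:ℤ)+1))) := by
    intro j _
    have e1 : ((n+1:ℕ):ℤ) - (((j+1:ℕ):ℤ)+1) = (n:ℤ) - ((j:ℤ)+1) := by push_cast; ring
    rw [e1]
    ring
  rw [Sfun, Finset.sum_range_succ', Finset.sum_congr rfl hsum, ← Finset.mul_sum, ← Sfun]
  have e0 : ((n+1:ℕ):ℤ) - (((0:ℕ):ℤ)+1) = (n:ℤ) := by push_cast; ring
  rw [e0]
  ring

lemma s0_key (n : ℕ) :
    sAut 0 (cvar ((n+1:ℕ):ℤ)) + Tv 1 * sAut 0 (cvar (n:ℤ))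
      = cvar ((n+1:ℕ):ℤ) - Tv 1 * cvar (n:ℤ) := by
  rw [sAut0_cvar_nat, sAut0_cvar_nat, Sfun_succ]
  have hn : negT 1 = - Tv 1 := rfl
  rw [hn]
  ring

lemma ne_zero_of_const_one (f : PowerSeries P) (h : constantCoeff f = 1) : f ≠ 0 := by
  intro h0
  rw [h0, map_zero] at h
  exact zero_ne_one h

lemma const_uu (m : ℕ) : constantCoeff (uu m) = 1 := by simp [uu]
lemma const_vv (m : ℕ) : constantCoeff (vv m) = 1 := by simp [vv]
lemma const_Pu (m : ℕ) : constantCoeff (Pu m) = 1 := by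
  rw [Pu, map_prod]
  simp [const_uu]
lemma const_Pv (m : ℕ) : constantCoeff (Pv m) = 1 := by
  rw [Pv, map_prod]
  simp [const_vv]
lemma const_map (i : ℕ) (f : PowerSeries P) :
    constantCoeff (map (sAut i) f) = sAut i (constantCoeff f) := by
  rw [← PowerSeries.coeff_zero_eq_constantCoeff_apply, PowerSeries.coeff_map,
    PowerSeries.coeff_zero_eq_constantCoeff_apply]

lemma psInvUnique {a b c : PowerSeries P} (h1 : a * c = 1) (h2 : b * c = 1) : a = b := by
  calc a = a * (b * c) := by rw [h2, mul_one]
    _ = b * (a * c) := by ring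
    _ = b := by rw [h1, mul_one]

lemma map_uu (i m : ℕ) : map (sAut i) (uu m) = 1 + C (sAut i (Tv m)) * X := by
  rw [uu, map_add, map_one, map_mul, PowerSeries.map_C, PowerSeries.map_X]

lemma map_vv (i m : ℕ) : map (sAut i) (vv m) = 1 - C (sAut i (Tv m)) * X := by
  rw [vv, map_sub, map_one, map_mul, PowerSeries.map_C, PowerSeries.map_X]

lemma map_uu_self (i : ℕ) (hi : 0 < i) : map (sAut i) (uu i) = uu (i+1) := by
  rw [map_uu, sAut_Tv_self i hi, uu]
lemma map_uu_succ (i : ℕ) (hi : 0 < i) : map (sAut i) (uu (i+1)) = uu i := by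
  rw [map_uu, sAut_Tv_succ i hi, uu]
lemma map_uu_other (i m : ℕ) (hi : 0 < i) (h1 : m ≠ i) (h2 : m ≠ i+1) :
    map (sAut i) (uu m) = uu m := by
  rw [map_uu, sAut_Tv_other i m hi h1 h2, uu]
lemma map_vv_self (i : ℕ) (hi : 0 < i) : map (sAut i) (vv i) = vv (i+1) := by
  rw [map_vv, sAut_Tv_self i hi, vv]
lemma map_vv_succ (i : ℕ) (hi : 0 < i) : map (sAut i) (vv (i+1)) = vv i := by
  rw [map_vv, sAut_Tv_succ i hi, vv]
lemma map_vv_other (i m : ℕ) (hi : 0 < i) (h1 : m ≠ i) (h2 : m ≠ i+1) :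
    map (sAut i) (vv m) = vv m := by
  rw [map_vv, sAut_Tv_other i m hi h1 h2, vv]
lemma map0_uu_one : map (sAut 0) (uu 1) = vv 1 := by
  rw [map_uu, sAut0_Tv_one, map_neg, vv]
  ring
lemma map0_vv_one : map (sAut 0) (vv 1) = uu 1 := by
  rw [map_vv, sAut0_Tv_one, map_neg, uu]
  ring
lemma map0_uu_other (m : ℕ) (hm : m ≠ 1) : map (sAut 0) (uu m) = uu m := by
  rw [map_uu, sAut0_Tv_other m hm, uu]
lemma map0_vv_other (m : ℕ) (hm : m ≠ 1) : map (sAut 0) (vv m) = vv m := by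
  rw [map_vv, sAut0_Tv_other m hm, vv]

lemma map_Cv (i : ℕ) (hi : 0 < i) : map (sAut i) Cv = Cv := by
  refine PowerSeries.ext fun n => ?_
  simp only [PowerSeries.coeff_map, Cv, coeff_mk]
  exact sAut_cvar i hi _

lemma map0_Cv : (map (sAut 0) Cv) * uu 1 = Cv * vv 1 := by
  refine PowerSeries.ext fun n => ?_
  cases n with
  | zero =>
      simp only [coeff_mul_uu_zero, coeff_mul_vv_zero, PowerSeries.coeff_map, Cv, coeff_mk]
      norm_num [cvar]
  | succ n =>
      simp only [coeff_mul_uu_succ, coeff_mul_vv_succ, PowerSeries.coeff_map, Cv, coeff_mk]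
      exact s0_key n

lemma Pu_succ (m : ℕ) : Pu (m+1) = Pu m * uu (m+1) := by
  rw [Pu, Pu, Finset.prod_range_succ]
lemma Pv_succ (m : ℕ) : Pv (m+1) = Pv m * vv (m+1) := by
  rw [Pv, Pv, Finset.prod_range_succ]
lemma Pu_zero : Pu 0 = 1 := by rw [Pu, Finset.range_zero, Finset.prod_empty]
lemma Pv_zero : Pv 0 = 1 := by rw [Pv, Finset.range_zero, Finset.prod_empty]

lemma map_Pu_lt (i m : ℕ) (hi : 0 < i) (hm : m < i) : map (sAut i) (Pu m) = Pu m := by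
  induction m with
  | zero => rw [Pu_zero, map_one]
  | succ m ih =>
      rw [Pu_succ, map_mul, ih (by omega), map_uu_other i (m+1) hi (by omega) (by omega)]

lemma map_Pv_lt (i m : ℕ) (hi : 0 < i) (hm : m < i) : map (sAut i) (Pv m) = Pv m := by
  induction m with
  | zero => rw [Pv_zero, map_one]
  | succ m ih =>
      rw [Pv_succ, map_mul, ih (by omega), map_vv_other i (m+1) hi (by omega) (by omega)]

lemma map_Pu_self (k : ℕ) : map (sAut (k+1)) (Pu (k+1)) = Pu k * uu (k+2) := by
  rw [Pu_succ, map_mul, map_Pu_lt (k+1) k (by omega) (by omega),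
    map_uu_self (k+1) (by omega)]

lemma map_Pv_self (k : ℕ) : map (sAut (k+1)) (Pv (k+1)) = Pv k * vv (k+2) := by
  rw [Pv_succ, map_mul, map_Pv_lt (k+1) k (by omega) (by omega),
    map_vv_self (k+1) (by omega)]

lemma map_Pu_ne (i m : ℕ) (hi : 0 < i) (hm : m ≠ i) : map (sAut i) (Pu m) = Pu m := by
  induction m with
  | zero => rw [Pu_zero, map_one]
  | succ m ih =>
      rcases lt_trichotomy (m+1) i with h | h | h
      · exact map_Pu_lt i (m+1) hi h
      · exact absurd h hm
      · rcases Nat.eq_or_lt_of_le (Nat.lt_iff_add_one_le.mp h) with h' | h'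
        · -- m + 1 = i + 1, i.e. m = i
          obtain ⟨k, rfl⟩ : ∃ k, i = k + 1 := ⟨i - 1, by omega⟩
          have hm' : m = k + 1 := by omega
          subst hm'
          rw [Pu_succ, map_mul, map_Pu_self, map_uu_succ (k+1) (by omega),
            Pu_succ]
          have e : k + 1 + 1 = k + 2 := rfl
          rw [e]
          ring
        · rw [Pu_succ, map_mul, ih (by omega),
            map_uu_other i (m+1) hi (by omega) (by omega)]

lemma map_Pv_ne (i m : ℕ) (hi : 0 < i) (hm : m ≠ i) : map (sAut i) (Pv m) = Pv m := by
  induction m with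
  | zero => rw [Pv_zero, map_one]
  | succ m ih =>
      rcases lt_trichotomy (m+1) i with h | h | h
      · exact map_Pv_lt i (m+1) hi h
      · exact absurd h hm
      · rcases Nat.eq_or_lt_of_le (Nat.lt_iff_add_one_le.mp h) with h' | h'
        · obtain ⟨k, rfl⟩ : ∃ k, i = k + 1 := ⟨i - 1, by omega⟩
          have hm' : m = k + 1 := by omega
          subst hm'
          rw [Pv_succ, map_mul, map_Pv_self, map_vv_succ (k+1) (by omega),
            Pv_succ]
          have e : k + 1 + 1 = k + 2 := rfl
          rw [e]
          ring
        · rw [Pv_succ, map_mul, ih (by omega),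
            map_vv_other i (m+1) hi (by omega) (by omega)]

lemma map0_Pu (m : ℕ) (hm : 1 ≤ m) : uu 1 * map (sAut 0) (Pu m) = vv 1 * Pu m := by
  induction m with
  | zero => omega
  | succ m ih =>
      rcases Nat.eq_zero_or_pos m with rfl | hm'
      · have e : Pu (0+1) = uu 1 := by
          rw [Pu_succ, Pu_zero, one_mul]
        rw [e, map0_uu_one, mul_comm]
      · rw [Pu_succ, map_mul, map0_uu_other (m+1) (by omega), ← mul_assoc, ih hm']
        ring

lemma map0_Pv (m : ℕ) (hm : 1 ≤ m) : vv 1 * map (sAut 0) (Pv m) = uu 1 * Pv m := by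
  induction m with
  | zero => omega
  | succ m ih =>
      rcases Nat.eq_zero_or_pos m with rfl | hm'
      · have e : Pv (0+1) = vv 1 := by
          rw [Pv_succ, Pv_zero, one_mul]
        rw [e, map0_vv_one, mul_comm]
      · rw [Pv_succ, map_mul, map0_vv_other (m+1) (by omega), ← mul_assoc, ih hm']
        ring

end MapLemmas
section Main
open PowerSeries

lemma Pu_one : Pu 1 = uu 1 := by rw [Pu_succ, Pu_zero, one_mul]

lemma map_Hps_pos (i m : ℕ) (hi : 0 < i) (hm : m ≠ i) :
    map (sAut i) (Hps (m:ℤ)) = Hps (m:ℤ) := by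
  have h1 : map (sAut i) (Hps (m:ℤ)) * Pu m = 1 := by
    have := congrArg (map (sAut i)) (Hps_mul_Pu m)
    rwa [map_mul, map_one, map_Pu_ne i m hi hm] at this
  exact psInvUnique h1 (Hps_mul_Pu m)

lemma map_Hps_neg (i m : ℕ) (hi : 0 < i) (hm : m ≠ i) :
    map (sAut i) (Hps (-(m:ℤ))) = Hps (-(m:ℤ)) := by
  rw [Hps_neg_eq, map_Pv_ne i m hi hm]

lemma map_Hps_self (k : ℕ) :
    map (sAut (k+1)) (Hps ((k+1:ℕ):ℤ)) = Hps (((k+1:ℕ):ℤ)+1) * uu (k+1) := by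
  have h1 : map (sAut (k+1)) (Hps ((k+1:ℕ):ℤ)) * (Pu k * uu (k+2)) = 1 := by
    have := congrArg (map (sAut (k+1))) (Hps_mul_Pu (k+1))
    rwa [map_mul, map_one, map_Pu_self] at this
  have h2 : (Hps (((k+1:ℕ):ℤ)+1) * uu (k+1)) * (Pu k * uu (k+2)) = 1 := by
    have e : (((k+1:ℕ):ℤ)+1) = ((k+2:ℕ):ℤ) := by push_cast; ring
    have hP : Pu (k+2) = Pu k * uu (k+1) * uu (k+2) := by
      rw [← Pu_succ, ← Pu_succ]
    calc (Hps (((k+1:ℕ):ℤ)+1) * uu (k+1)) * (Pu k * uu (k+2))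
        = Hps ((k+2:ℕ):ℤ) * (Pu k * uu (k+1) * uu (k+2)) := by rw [e]; ring
      _ = 1 := by rw [← hP, Hps_mul_Pu]
  exact psInvUnique h1 h2

lemma map_Hps_self_neg (k : ℕ) :
    map (sAut (k+1)) (Hps (-((k+1:ℕ):ℤ))) = Hps (-((k+1:ℕ):ℤ)+1) * vv (k+2) := by
  have e : -((k+1:ℕ):ℤ)+1 = -((k:ℕ):ℤ) := by push_cast; ring
  rw [Hps_neg_eq, map_Pv_self, e, Hps_neg_eq]

lemma map_Cps_fix_pos (i m : ℕ) (hi : 0 < i) (hm : m ≠ i) :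
    map (sAut i) (Cps (m:ℤ)) = Cps (m:ℤ) := by
  rw [Cps_eq, map_mul, map_Cv i hi, map_Hps_pos i m hi hm, ← Cps_eq]

lemma map_Cps_fix_neg (i m : ℕ) (hi : 0 < i) (hm : m ≠ i) :
    map (sAut i) (Cps (-(m:ℤ))) = Cps (-(m:ℤ)) := by
  rw [Cps_eq, map_mul, map_Cv i hi, map_Hps_neg i m hi hm, ← Cps_eq]

lemma map_Cps_self (i : ℕ) (hi : 0 < i) :
    map (sAut i) (Cps (i:ℤ)) = Cps ((i:ℤ)+1) * uu i := by
  obtain ⟨k, rfl⟩ : ∃ k, i = k + 1 := ⟨i - 1, by omega⟩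
  have e : ((k+1:ℕ):ℤ)+1 = ((k+2:ℕ):ℤ) := by push_cast; ring
  rw [Cps_eq, map_mul, map_Cv (k+1) hi, map_Hps_self, Cps_eq, e]
  ring

lemma map_Cps_self_neg (i : ℕ) (hi : 0 < i) :
    map (sAut i) (Cps (-(i:ℤ))) = Cps (-(i:ℤ)+1) * vv (i+1) := by
  obtain ⟨k, rfl⟩ : ∃ k, i = k + 1 := ⟨i - 1, by omega⟩
  rw [Cps_eq, map_mul, map_Cv (k+1) hi, map_Hps_self_neg, Cps_eq]
  have e : k + 1 + 1 = k + 2 := rfl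
  rw [e]
  ring

lemma map0_Cps_zero : map (sAut 0) (Cps 0) = Cps 1 * vv 1 := by
  have hC : Cps (0:ℤ) = Cv := by rw [Cps_eq, Hps_zero, mul_one]
  have hu : uu 1 ≠ 0 := ne_zero_of_const_one _ (const_uu 1)
  apply mul_right_cancel₀ hu
  rw [hC, map0_Cv, Cps_eq]
  have h1 : Hps (1:ℤ) * uu 1 = 1 := by
    have := Hps_mul_Pu 1
    rwa [Pu_one, Nat.cast_one] at this
  calc Cv * vv 1 = Cv * (Hps 1 * uu 1) * vv 1 := by rw [h1, mul_one]
    _ = Cv * Hps 1 * vv 1 * uu 1 := by ring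

lemma map0_Cps_pos (m : ℕ) (hm : 1 ≤ m) :
    map (sAut 0) (Cps (m:ℤ)) = Cps (m:ℤ) := by
  have hne : uu 1 * map (sAut 0) (Pu m) ≠ 0 := by
    apply ne_zero_of_const_one
    rw [map_mul, const_uu, const_map, const_Pu, map_one, one_mul]
  apply mul_right_cancel₀ hne
  calc map (sAut 0) (Cps (m:ℤ)) * (uu 1 * map (sAut 0) (Pu m))
      = (map (sAut 0) Cv * uu 1) * map (sAut 0) (Hps (m:ℤ) * Pu m) := by
        rw [Cps_eq, map_mul, map_mul]; ring
    _ = Cv * vv 1 := by rw [Hps_mul_Pu, map_one, mul_one, map0_Cv]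
    _ = Cv * Hps (m:ℤ) * (vv 1 * Pu m) := by
        have : Hps (m:ℤ) * Pu m = 1 := Hps_mul_Pu m
        calc Cv * vv 1 = Cv * vv 1 * (Hps (m:ℤ) * Pu m) := by rw [this, mul_one]
          _ = Cv * Hps (m:ℤ) * (vv 1 * Pu m) := by ring
    _ = Cps (m:ℤ) * (uu 1 * map (sAut 0) (Pu m)) := by rw [← map0_Pu m hm, Cps_eq]

lemma map0_Cps_neg (m : ℕ) (hm : 1 ≤ m) :
    map (sAut 0) (Cps (-(m:ℤ))) = Cps (-(m:ℤ)) := by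
  have hne : uu 1 * vv 1 ≠ 0 := by
    apply ne_zero_of_const_one
    rw [map_mul, const_uu, const_vv, one_mul]
  apply mul_right_cancel₀ hne
  calc map (sAut 0) (Cps (-(m:ℤ))) * (uu 1 * vv 1)
      = (map (sAut 0) Cv * uu 1) * (vv 1 * map (sAut 0) (Pv m)) := by
        rw [Cps_eq, Hps_neg_eq, map_mul]; ring
    _ = (Cv * vv 1) * (uu 1 * Pv m) := by rw [map0_Cv, map0_Pv m hm]
    _ = Cps (-(m:ℤ)) * (uu 1 * vv 1) := by rw [Cps_eq, Hps_neg_eq]; ring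

lemma cc_of_neg (r p : ℤ) (hp : p < 0) : cc r p = 0 := by
  have h0 : p.toNat = 0 := by omega
  rw [cc, h0]
  rw [Finset.range_one, Finset.sum_singleton, Nat.cast_zero, sub_zero,
    cvar, if_neg (by omega), if_pos hp, zero_mul]

lemma extract_eq {i : ℕ} {r r' : ℤ} (h : map (sAut i) (Cps r) = Cps r') (p : ℤ) :
    sAut i (cc r p) = cc r' p := by
  rcases lt_or_ge p 0 with hp | hp
  · rw [cc_of_neg r p hp, cc_of_neg r' p hp, map_zero]
  · obtain ⟨n, rfl⟩ := Int.eq_ofNat_of_zero_le hp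
    have h2 := congrArg (coeff n) h
    simp only [PowerSeries.coeff_map, Cps, coeff_mk] at h2
    exact h2

lemma extract_uu {i m : ℕ} {r r' : ℤ} (h : map (sAut i) (Cps r) = Cps r' * uu m) (p : ℤ) :
    sAut i (cc r p) = cc r' p + Tv m * cc r' (p-1) := by
  rcases lt_or_ge p 0 with hp | hp
  · rw [cc_of_neg r p hp, cc_of_neg r' p hp, cc_of_neg r' (p-1) (by omega), map_zero,
      mul_zero, add_zero]
  · obtain ⟨n, rfl⟩ := Int.eq_ofNat_of_zero_le hp
    have h2 := congrArg (coeff n) h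
    cases n with
    | zero =>
        rw [coeff_mul_uu_zero] at h2
        simp only [PowerSeries.coeff_map, Cps, coeff_mk] at h2
        rw [h2, Nat.cast_zero, cc_of_neg r' ((0:ℤ)-1) (by omega), mul_zero, add_zero]
    | succ n =>
        rw [coeff_mul_uu_succ] at h2
        simp only [PowerSeries.coeff_map, Cps, coeff_mk] at h2
        rw [h2]
        have e : ((n+1:ℕ):ℤ) - 1 = (n:ℕ) := by push_cast; ring
        rw [e]

lemma extract_vv {i m : ℕ} {r r' : ℤ} (h : map (sAut i) (Cps r) = Cps r' * vv m) (p : ℤ) :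
    sAut i (cc r p) = cc r' p - Tv m * cc r' (p-1) := by
  rcases lt_or_ge p 0 with hp | hp
  · rw [cc_of_neg r p hp, cc_of_neg r' p hp, cc_of_neg r' (p-1) (by omega), map_zero,
      mul_zero, sub_zero]
  · obtain ⟨n, rfl⟩ := Int.eq_ofNat_of_zero_le hp
    have h2 := congrArg (coeff n) h
    cases n with
    | zero =>
        rw [coeff_mul_vv_zero] at h2
        simp only [PowerSeries.coeff_map, Cps, coeff_mk] at h2
        rw [h2, Nat.cast_zero, cc_of_neg r' ((0:ℤ)-1) (by omega), mul_zero, sub_zero]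
    | succ n =>
        rw [coeff_mul_vv_succ] at h2
        simp only [PowerSeries.coeff_map, Cps, coeff_mk] at h2
        rw [h2]
        have e : ((n+1:ℕ):ℤ) - 1 = (n:ℕ) := by push_cast; ring
        rw [e]

lemma tvar_natCast (m : ℕ) : tvar (m:ℤ) = Tv m := by
  rw [tvar, Int.natAbs_natCast]
  rfl

end Main
theorem stmt17 (i : ℕ) (r p : ℤ) :
    ((r ≠ (i:ℤ) ∧ r ≠ -(i:ℤ)) → sAut i (cc r p) = cc r p) ∧
    ((0 < i ∧ r = (i:ℤ)) →
      sAut i (cc r p) = cc ((i:ℤ) + 1) p + tvar (i:ℤ) * cc ((i:ℤ) + 1) (p - 1)) ∧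
    (r = -(i:ℤ) →
      sAut i (cc r p) = cc (-(i:ℤ) + 1) p - tvar ((i:ℤ) + 1) * cc (-(i:ℤ) + 1) (p - 1)) := by
  refine ⟨?_, ?_, ?_⟩
  · rintro ⟨h1, h2⟩
    rcases Nat.eq_zero_or_pos i with rfl | hi
    · rcases le_or_gt 0 r with hr | hr
      · obtain ⟨m, rfl⟩ := Int.eq_ofNat_of_zero_le hr
        have hm : 1 ≤ m := by omega
        exact extract_eq (map0_Cps_pos m hm) p
      · obtain ⟨m, hm⟩ := Int.eq_ofNat_of_zero_le (show (0:ℤ) ≤ -r by omega)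
        have hrr : r = -(m:ℤ) := by omega
        subst hrr
        have hm1 : 1 ≤ m := by omega
        exact extract_eq (map0_Cps_neg m hm1) p
    · rcases le_or_gt 0 r with hr | hr
      · obtain ⟨m, rfl⟩ := Int.eq_ofNat_of_zero_le hr
        have hmi : m ≠ i := by omega
        exact extract_eq (map_Cps_fix_pos i m hi hmi) p
      · obtain ⟨m, hm⟩ := Int.eq_ofNat_of_zero_le (show (0:ℤ) ≤ -r by omega)
        have hrr : r = -(m:ℤ) := by omega
        subst hrr
        have hmi : m ≠ i := by omega
        exact extract_eq (map_Cps_fix_neg i m hi hmi) p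
  · rintro ⟨hi, rfl⟩
    rw [tvar_natCast]
    exact extract_uu (map_Cps_self i hi) p
  · rintro rfl
    rcases Nat.eq_zero_or_pos i with rfl | hi
    · have e2 : tvar (((0:ℕ):ℤ)+1) = Tv 1 := by
        rw [show ((0:ℕ):ℤ)+1 = ((1:ℕ):ℤ) by norm_num, tvar_natCast]
      rw [e2]
      simp only [Nat.cast_zero, neg_zero, zero_add]
      exact extract_vv map0_Cps_zero p
    · have e1 : tvar ((i:ℤ)+1) = Tv (i+1) := by
        rw [show (i:ℤ)+1 = ((i+1:ℕ):ℤ) by push_cast; ring, tvar_natCast]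
      rw [e1]
      exact extract_vv (map_Cps_self_neg i hi) p

end
end

section
/- (a) For all integers p, r and all i ≥ 0: ∂_i(c^r_p) = c^{r+1}_{p−1} if r = i or r = −i, and ∂_i(c^r_p) = 0 otherwise. (b) For all i ≥ 1 and all integers p, q: ∂_i(c^{−i}_p · c^{i}_q) = c^{−i+1}_{p−1} · c^{i+1}_q + c^{−i+1}_p · c^{i+1}_{q−1}. Both identities hold in ℤ[c,t]. -/
open scoped Classical

noncomputable section

namespace Stmt18Aux
open Finset MvPolynomial

/-- generic complete homogeneous in variables `negT l`, `l ∈ s`. -/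
def Haux (s : Finset ℕ) (j : ℕ) : P :=
  ∑ f ∈ s.sym j, (Multiset.map negT (f : Multiset ℕ)).prod

/-- generic elementary symmetric in variables `negT l`, `l ∈ s`. -/
def Eaux (s : Finset ℕ) (j : ℕ) : P :=
  ∑ S ∈ s.powersetCard j, ∏ l ∈ S, negT l

@[simp] lemma Haux_zero (s : Finset ℕ) : Haux s 0 = 1 := by
  simp only [Haux, Finset.sym_zero, Finset.sum_singleton]
  rfl

@[simp] lemma Eaux_zero (s : Finset ℕ) : Eaux s 0 = 1 := by
  simp [Eaux]

@[simp] lemma Haux_empty_succ (j : ℕ) : Haux ∅ (j+1) = 0 := by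
  simp [Haux]

@[simp] lemma Eaux_empty_succ (j : ℕ) : Eaux ∅ (j+1) = 0 := by
  rw [Eaux, Finset.powersetCard_eq_empty.2 (by simp), Finset.sum_empty]

lemma Haux_empty (j : ℕ) : Haux ∅ j = Eaux ∅ j := by
  cases j <;> simp

lemma Eaux_insert {a : ℕ} {s : Finset ℕ} (ha : a ∉ s) (j : ℕ) :
    Eaux (insert a s) (j+1) = Eaux s (j+1) + negT a * Eaux s j := by
  classical
  unfold Eaux
  rw [Finset.powersetCard_succ_insert ha]
  rw [Finset.sum_union]
  · congr 1
    rw [Finset.sum_image, Finset.mul_sum]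
    · refine Finset.sum_congr rfl fun S hS => ?_
      have haS : a ∉ S := fun h => ha ((Finset.mem_powersetCard.1 hS).1 h)
      rw [Finset.prod_insert haS]
    · intro S hS T hT hST
      have haS : a ∉ S := fun h => ha ((Finset.mem_powersetCard.1 hS).1 h)
      have haT : a ∉ T := fun h => ha ((Finset.mem_powersetCard.1 hT).1 h)
      rw [← Finset.erase_insert haS, ← Finset.erase_insert haT, hST]
  · rw [Finset.disjoint_right]
    rintro S hS hS'
    rw [Finset.mem_image] at hS
    obtain ⟨T, hT, rfl⟩ := hS
    have : a ∉ insert a T := fun h => by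
      exact absurd ((Finset.mem_powersetCard.1 hS').1 h) ha
    exact this (Finset.mem_insert_self a T)

lemma Haux_insert {a : ℕ} {s : Finset ℕ} (ha : a ∉ s) (j : ℕ) :
    Haux (insert a s) (j+1) = Haux s (j+1) + negT a * Haux (insert a s) j := by
  classical
  unfold Haux
  rw [← Finset.sum_filter_add_sum_filter_not ((insert a s).sym (j+1)) (fun f => a ∈ f)]
  rw [add_comm]
  congr 1
  · -- a ∉ f: these are exactly the elements of s.sym (j+1)
    apply Finset.sum_congr
    · ext f
      simp only [Finset.mem_filter, Finset.mem_sym_iff, Finset.mem_insert]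
      constructor
      · rintro ⟨h1, h2⟩ b hb
        rcases h1 b hb with rfl | h
        · exact absurd hb h2
        · exact h
      · intro h
        exact ⟨fun b hb => Or.inr (h b hb), fun hb => ha (h a hb)⟩
    · intros; rfl
  · -- a ∈ f: bijection with (insert a s).sym j via cons
    rw [Finset.mul_sum]
    refine Finset.sum_nbij'
      (fun f => dite (a ∈ f) (fun h => f.erase a h) (fun _ => Sym.replicate j a))
      (fun f => Sym.cons a f) ?_ ?_ ?_ ?_ ?_
    · intro f hf
      simp only [Finset.mem_filter, Finset.mem_sym_iff] at hf
      obtain ⟨h1, h2⟩ := hf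
      rw [dif_pos h2]
      simp only [Finset.mem_sym_iff]
      intro b hb
      have : b ∈ a ::ₛ f.erase a h2 := Sym.mem_cons_of_mem hb
      rw [Sym.cons_erase h2] at this
      exact h1 b this
    · intro f hf
      simp only [Finset.mem_filter, Finset.mem_sym_iff] at hf ⊢
      refine ⟨fun b hb => ?_, Sym.mem_cons_self a f⟩
      rcases Sym.mem_cons.1 hb with h | h
      · rw [h]; exact Finset.mem_insert_self a s
      · exact hf b h
    · intro f hf
      simp only [Finset.mem_filter] at hf
      rw [dif_pos hf.2, Sym.cons_erase]
    · intro f hf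
      rw [dif_pos (Sym.mem_cons_self a f), Sym.erase_cons_head]
    · intro f hf
      simp only [Finset.mem_filter] at hf
      rw [dif_pos hf.2]
      conv_lhs => rw [← Sym.cons_erase hf.2]
      rw [Sym.coe_cons, Multiset.map_cons, Multiset.prod_cons]

lemma ringHom_Haux (σ : P →+* P) (e : ℕ ≃ ℕ) (he : ∀ l, σ (negT l) = negT (e l))
    (s : Finset ℕ) (j : ℕ) : σ (Haux s j) = Haux (s.image e) j := by
  classical
  unfold Haux
  rw [map_sum]
  refine Finset.sum_nbij' (fun f => f.map e) (fun f => f.map e.symm) ?_ ?_ ?_ ?_ ?_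
  · intro f hf
    simp only [Finset.mem_sym_iff] at hf ⊢
    intro b hb
    obtain ⟨c, hc, rfl⟩ := Sym.mem_map.1 hb
    exact Finset.mem_image_of_mem e (hf c hc)
  · intro f hf
    simp only [Finset.mem_sym_iff] at hf ⊢
    intro b hb
    obtain ⟨c, hc, rfl⟩ := Sym.mem_map.1 hb
    obtain ⟨d, hd, rfl⟩ := Finset.mem_image.1 (hf c hc)
    simpa using hd
  · intro f hf
    simp [Sym.map_map]
  · intro f hf
    simp [Sym.map_map]
  · intro f hf
    rw [map_multiset_prod, Multiset.map_map, Sym.coe_map, Multiset.map_map]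
    exact congrArg Multiset.prod (Multiset.map_congr rfl fun b _ => he b)

lemma ringHom_Eaux (σ : P →+* P) (e : ℕ ≃ ℕ) (he : ∀ l, σ (negT l) = negT (e l))
    (s : Finset ℕ) (j : ℕ) : σ (Eaux s j) = Eaux (s.image e) j := by
  classical
  unfold Eaux
  rw [map_sum]
  refine Finset.sum_nbij' (fun S => S.image e) (fun S => S.image e.symm) ?_ ?_ ?_ ?_ ?_
  · intro S hS
    rw [Finset.mem_powersetCard] at hS ⊢
    exact ⟨Finset.image_subset_image hS.1, by rw [Finset.card_image_of_injective _ e.injective, hS.2]⟩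
  · intro S hS
    rw [Finset.mem_powersetCard] at hS ⊢
    constructor
    · intro b hb
      obtain ⟨c, hc, rfl⟩ := Finset.mem_image.1 hb
      obtain ⟨d, hd, rfl⟩ := Finset.mem_image.1 (hS.1 hc)
      simpa using hd
    · rw [Finset.card_image_of_injective _ e.symm.injective, hS.2]
  · intro S hS
    simp [Finset.image_image]
  · intro S hS
    simp [Finset.image_image]
  · intro S hS
    rw [map_prod, Finset.prod_image (fun x _ y _ h => e.injective h)]
    exact Finset.prod_congr rfl fun l _ => he l



-- ### hNT and cc basics

lemma hNT_coe (m j : ℕ) : hNT (m:ℤ) (j:ℤ) = Haux (Finset.Icc 1 m) j := by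
  rw [hNT, if_neg (by omega), if_pos (by omega)]
  simp [hsymNT, Haux]

lemma hNT_negcoe (m j : ℕ) : hNT (-(m:ℤ)) (j:ℤ) = Eaux (Finset.Icc 1 m) j := by
  rcases Nat.eq_zero_or_pos m with rfl | hm
  · rw [hNT, if_neg (by omega), if_pos (by omega)]
    simpa [hsymNT, Haux] using (Haux_empty j).trans (by simp [Eaux, Eaux_zero])
  · rw [hNT, if_neg (by omega), if_neg (by omega)]
    have h1 : (-(-(m:ℤ))).toNat = m := by omega
    have h2 : ((j:ℤ)).toNat = j := by omega
    rw [h1, h2]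
    rfl

lemma hNT_zero (r : ℤ) : hNT r 0 = 1 := by
  rcases le_or_gt 0 r with h | h
  · obtain ⟨m, rfl⟩ := Int.eq_ofNat_of_zero_le h
    exact (hNT_coe m 0).trans (Haux_zero _)
  · obtain ⟨m, rfl⟩ : ∃ m : ℕ, r = -(m:ℤ) := ⟨r.natAbs, by omega⟩
    exact (hNT_negcoe m 0).trans (Eaux_zero _)

lemma cvar_neg {p : ℤ} (h : p < 0) : cvar p = 0 := by
  rw [cvar, if_neg (by omega), if_pos h]

@[simp] lemma cvar_zero : cvar 0 = 1 := by rw [cvar, if_pos rfl]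

-- ### SumC machinery

def SumC (F : ℕ → P) (p : ℤ) : P :=
  ∑ j ∈ Finset.range (p.toNat + 1), cvar (p - j) * F j

lemma cc_eq_SumC (r p : ℤ) : cc r p = SumC (fun j => hNT r (j:ℤ)) p := rfl

lemma SumC_congr {F G : ℕ → P} (h : ∀ j, F j = G j) (p : ℤ) : SumC F p = SumC G p := by
  unfold SumC; exact Finset.sum_congr rfl fun j _ => by rw [h j]

lemma SumC_nonpos {F : ℕ → P} {p : ℤ} (hp : p < 0) : SumC F p = 0 := by
  have h0 : p.toNat = 0 := by omega
  rw [SumC, h0, Finset.range_one, Finset.sum_singleton, Nat.cast_zero, sub_zero,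
    cvar_neg hp, zero_mul]

lemma SumC_shift (F : ℕ → P) (p : ℤ) :
    SumC (fun j => if j = 0 then 0 else F (j-1)) p = SumC F (p-1) := by
  rcases lt_or_ge p 1 with hp | hp
  · rcases lt_or_ge p 0 with hp0 | hp0
    · rw [SumC_nonpos hp0, SumC_nonpos (by omega)]
    · have hp00 : p = 0 := by omega
      subst hp00
      rw [SumC_nonpos (by norm_num : (0:ℤ)-1 < 0), SumC]
      simp
  · have htn : p.toNat = (p-1).toNat + 1 := by omega
    rw [SumC, htn, Finset.sum_range_succ']
    have hterm : ∀ j ∈ Finset.range ((p-1).toNat + 1),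
        cvar (p - ((j+1:ℕ):ℤ)) * (if j+1 = 0 then (0:P) else F (j+1-1))
          = cvar ((p-1) - (j:ℤ)) * F j := by
      intro j _
      rw [if_neg (Nat.succ_ne_zero _)]
      congr 2
      · push_cast; ring
    rw [Finset.sum_congr rfl hterm, SumC]
    simp

lemma SumC_linear (F G H : ℕ → P) (x : P) (h : ∀ j, F j = G j + x * H j) (p : ℤ) :
    SumC F p = SumC G p + x * SumC H p := by
  unfold SumC
  rw [Finset.mul_sum, ← Finset.sum_add_distrib]
  refine Finset.sum_congr rfl fun j _ => ?_
  rw [h j]; ring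

-- ### cc basics and recurrences

lemma cc_nonpos {r p : ℤ} (hp : p < 0) : cc r p = 0 := by
  rw [cc_eq_SumC]; exact SumC_nonpos hp

lemma cc_zero (r : ℤ) : cc r 0 = 1 := by
  rw [cc]
  simp [hNT_zero]

lemma cc_zero_left (p : ℤ) : cc 0 p = cvar p := by
  rw [cc]
  rw [Finset.sum_eq_single 0]
  · simp [hNT_zero 0]
  · intro j _ hj
    obtain ⟨j', rfl⟩ : ∃ j', j = j' + 1 := ⟨j - 1, by omega⟩
    have hc := hNT_coe 0 (j'+1)
    rw [Nat.cast_zero] at hc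
    rw [hc, show Finset.Icc 1 0 = ∅ from Finset.Icc_eq_empty (by omega), Haux_empty_succ,
      mul_zero]
  · intro h
    exact absurd (Finset.mem_range.2 (by omega)) h

lemma Icc_succ_insert (m : ℕ) (hm : 1 ≤ m) :
    Finset.Icc 1 m = insert m (Finset.Icc 1 (m-1)) := by
  ext x
  simp only [Finset.mem_Icc, Finset.mem_insert]
  omega

lemma not_mem_Icc_pred (m : ℕ) : m ∉ Finset.Icc 1 (m-1) := by
  simp only [Finset.mem_Icc]; omega

/-- pointwise recurrence for complete homogeneous -/
lemma hNT_rec_pos (r : ℕ) (hr : 1 ≤ r) (j : ℕ) :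
    hNT (r:ℤ) (j:ℤ) = hNT ((r:ℤ)-1) (j:ℤ)
      + negT r * (if j = 0 then 0 else hNT (r:ℤ) ((j:ℤ)-1)) := by
  have hcast : ((r:ℤ)-1) = ((r-1 : ℕ) : ℤ) := by omega
  rw [hcast, hNT_coe, hNT_coe]
  cases j with
  | zero => simp
  | succ j' =>
    rw [if_neg (Nat.succ_ne_zero _)]
    have : ((j'+1:ℕ):ℤ) - 1 = ((j':ℕ):ℤ) := by push_cast; ring
    rw [this, hNT_coe]
    rw [Icc_succ_insert r hr, Haux_insert (not_mem_Icc_pred r) j']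

/-- pointwise recurrence for elementary -/
lemma hNT_rec_neg (m : ℕ) (hm : 1 ≤ m) (j : ℕ) :
    hNT (-(m:ℤ)) (j:ℤ) = hNT (-(m:ℤ)+1) (j:ℤ)
      + negT m * (if j = 0 then 0 else hNT (-(m:ℤ)+1) ((j:ℤ)-1)) := by
  have hcast : (-(m:ℤ)+1) = -((m-1 : ℕ) : ℤ) := by omega
  rw [hcast, hNT_negcoe, hNT_negcoe]
  cases j with
  | zero => simp
  | succ j' =>
    rw [if_neg (Nat.succ_ne_zero _)]
    have : ((j'+1:ℕ):ℤ) - 1 = ((j':ℕ):ℤ) := by push_cast; ring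
    rw [this, hNT_negcoe]
    rw [Icc_succ_insert m hm, Eaux_insert (not_mem_Icc_pred m) j']

lemma cc_rec_pos (r : ℕ) (hr : 1 ≤ r) (p : ℤ) :
    cc (r:ℤ) p = cc ((r:ℤ)-1) p + negT r * cc (r:ℤ) (p-1) := by
  rw [cc_eq_SumC, cc_eq_SumC, cc_eq_SumC, ← SumC_shift (fun j => hNT (r:ℤ) (j:ℤ)) p]
  refine SumC_linear _ _ _ _ (fun j => ?_) p
  have := hNT_rec_pos r hr j
  cases j with
  | zero => simpa using this
  | succ j' =>
    simp only [if_neg (Nat.succ_ne_zero _)] at this ⊢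
    convert this using 4
    push_cast; ring

lemma cc_rec_neg (m : ℕ) (hm : 1 ≤ m) (p : ℤ) :
    cc (-(m:ℤ)) p = cc (-(m:ℤ)+1) p + negT m * cc (-(m:ℤ)+1) (p-1) := by
  rw [cc_eq_SumC, cc_eq_SumC, cc_eq_SumC, ← SumC_shift (fun j => hNT (-(m:ℤ)+1) (j:ℤ)) p]
  refine SumC_linear _ _ _ _ (fun j => ?_) p
  have := hNT_rec_neg m hm j
  cases j with
  | zero => simpa using this
  | succ j' =>
    simp only [if_neg (Nat.succ_ne_zero _)] at this ⊢
    convert this using 4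
    push_cast; ring

-- ### sAut basics

lemma sAut_X (i : ℕ) (v : ℕ ⊕ ℕ) : sAut i (MvPolynomial.X v) = sImage i v := by
  simp [sAut]

lemma cvar_coe (n : ℕ) (hn : 1 ≤ n) : cvar (n:ℤ) = MvPolynomial.X (Sum.inl n) := by
  rw [cvar, if_neg (by omega), if_neg (by omega), Int.toNat_natCast]

lemma sAut_cvar (i : ℕ) (hi : 1 ≤ i) (p : ℤ) : sAut i (cvar p) = cvar p := by
  rcases lt_trichotomy p 0 with h | rfl | h
  · rw [cvar_neg h, map_zero]
  · rw [cvar_zero, map_one]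
  · obtain ⟨n, rfl⟩ : ∃ n : ℕ, p = (n:ℤ) := ⟨p.toNat, by omega⟩
    rw [cvar_coe n (by omega), sAut_X]
    show (if i = 0 then _ else _) = _
    rw [if_neg (by omega)]

lemma sAut_negT (i : ℕ) (hi : 1 ≤ i) (l : ℕ) :
    sAut i (negT l) = negT (Equiv.swap i (i+1) l) := by
  rw [negT, map_neg, sAut_X, negT]
  congr 1
  show (if i = 0 then _ else if l = i then _ else if l = i+1 then _ else _) = _
  rw [if_neg (by omega), Equiv.swap_apply_def]
  split_ifs with h1 h2 <;> rfl

lemma swap_image_Icc_ne (i m : ℕ) (hi : 1 ≤ i) (hm : m ≠ i) :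
    (Finset.Icc 1 m).image (Equiv.swap i (i+1)) = Finset.Icc 1 m := by
  ext x
  simp only [Finset.mem_image, Finset.mem_Icc]
  constructor
  · rintro ⟨y, hy, rfl⟩
    rw [Equiv.swap_apply_def]
    split_ifs with h1 h2 <;> simp_all <;> omega
  · intro hx
    refine ⟨Equiv.swap i (i+1) x, ?_, Equiv.swap_apply_self _ _ _⟩
    rw [Equiv.swap_apply_def]
    split_ifs with h1 h2 <;> simp_all <;> omega

lemma swap_image_Icc_eq (i : ℕ) (hi : 1 ≤ i) :
    (Finset.Icc 1 i).image (Equiv.swap i (i+1)) = insert (i+1) (Finset.Icc 1 (i-1)) := by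
  ext x
  simp only [Finset.mem_image, Finset.mem_Icc, Finset.mem_insert]
  constructor
  · rintro ⟨y, hy, rfl⟩
    rw [Equiv.swap_apply_def]
    split_ifs with h1 h2 <;> simp_all <;> omega
  · intro hx
    refine ⟨Equiv.swap i (i+1) x, ?_, Equiv.swap_apply_self _ _ _⟩
    rw [Equiv.swap_apply_def]
    split_ifs with h1 h2 <;> simp_all <;> omega

-- invariance of cc under sAut i when |r| ≠ i, i ≥ 1
lemma sAut_cc_invariant (i : ℕ) (hi : 1 ≤ i) (r p : ℤ) (h1 : r ≠ (i:ℤ)) (h2 : r ≠ -(i:ℤ)) :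
    sAut i (cc r p) = cc r p := by
  rw [cc_eq_SumC, SumC, map_sum]
  refine Finset.sum_congr rfl fun j _ => ?_
  rw [map_mul, sAut_cvar i hi]
  congr 1
  rcases le_or_gt 0 r with hr | hr
  · obtain ⟨m, rfl⟩ : ∃ m : ℕ, r = (m:ℤ) := ⟨r.toNat, by omega⟩
    rw [hNT_coe, ringHom_Haux (sAut i) (Equiv.swap i (i+1)) (sAut_negT i hi),
      swap_image_Icc_ne i m hi (by omega)]
  · obtain ⟨m, rfl⟩ : ∃ m : ℕ, r = -(m:ℤ) := ⟨r.natAbs, by omega⟩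
    rw [hNT_negcoe, ringHom_Eaux (sAut i) (Equiv.swap i (i+1)) (sAut_negT i hi),
      swap_image_Icc_ne i m hi (by omega)]

lemma dden_eq (i : ℕ) (hi : 1 ≤ i) : dden i = negT i - negT (i+1) := by
  rw [dden, if_neg (by omega), negT, negT]
  ring

-- main divided-difference identity, positive case
lemma delta_pos (i : ℕ) (hi : 1 ≤ i) (p : ℤ) :
    cc (i:ℤ) p = sAut i (cc (i:ℤ) p) + dden i * cc ((i:ℤ)+1) (p-1) := by
  have himg : sAut i (cc (i:ℤ) p)
      = SumC (fun j => Haux (insert (i+1) (Finset.Icc 1 (i-1))) j) p := by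
    rw [cc_eq_SumC, SumC, SumC, map_sum]
    refine Finset.sum_congr rfl fun j _ => ?_
    rw [map_mul, sAut_cvar i hi]
    congr 1
    rw [hNT_coe, ringHom_Haux (sAut i) (Equiv.swap i (i+1)) (sAut_negT i hi),
      swap_image_Icc_eq i hi]
  have hcc1 : cc ((i:ℤ)+1) (p-1)
      = SumC (fun j => if j = 0 then 0 else Haux (Finset.Icc 1 (i+1)) (j-1)) p := by
    rw [cc_eq_SumC, ← SumC_shift]
    refine SumC_congr (fun j => ?_) p
    cases j with
    | zero => rfl
    | succ j' =>
      simp only [if_neg (Nat.succ_ne_zero _), Nat.add_sub_cancel]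
      have : ((i:ℤ)+1) = ((i+1 : ℕ) : ℤ) := by push_cast; ring
      rw [this, hNT_coe]
  rw [himg, hcc1, cc_eq_SumC]
  refine SumC_linear _ _ _ _ (fun j => ?_) p
  -- pointwise identity
  have hins1 : Finset.Icc 1 (i+1) = insert i (insert (i+1) (Finset.Icc 1 (i-1))) := by
    ext x; simp only [Finset.mem_Icc, Finset.mem_insert]; omega
  have hins2 : Finset.Icc 1 (i+1) = insert (i+1) (Finset.Icc 1 i) := by
    ext x; simp only [Finset.mem_Icc, Finset.mem_insert]; omega
  have hmem1 : i ∉ insert (i+1) (Finset.Icc 1 (i-1)) := by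
    simp only [Finset.mem_insert, Finset.mem_Icc]; omega
  have hmem2 : i+1 ∉ Finset.Icc 1 i := by
    simp only [Finset.mem_Icc]; omega
  cases j with
  | zero =>
    rw [hNT_coe]
    simp
  | succ j' =>
    rw [hNT_coe, if_neg (Nat.succ_ne_zero _), Nat.add_sub_cancel]
    have e1 : Haux (Finset.Icc 1 (i+1)) (j'+1)
        = Haux (insert (i+1) (Finset.Icc 1 (i-1))) (j'+1)
          + negT i * Haux (Finset.Icc 1 (i+1)) j' := by
      conv_lhs => rw [hins1]
      rw [Haux_insert hmem1 j', ← hins1]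
    have e2 : Haux (Finset.Icc 1 (i+1)) (j'+1)
        = Haux (Finset.Icc 1 i) (j'+1)
          + negT (i+1) * Haux (Finset.Icc 1 (i+1)) j' := by
      conv_lhs => rw [hins2]
      rw [Haux_insert hmem2 j', ← hins2]
    rw [dden_eq i hi]
    linear_combination e1 - e2

-- main divided-difference identity, negative case
lemma delta_neg (i : ℕ) (hi : 1 ≤ i) (p : ℤ) :
    cc (-(i:ℤ)) p = sAut i (cc (-(i:ℤ)) p) + dden i * cc (-(i:ℤ)+1) (p-1) := by
  have himg : sAut i (cc (-(i:ℤ)) p)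
      = SumC (fun j => Eaux (insert (i+1) (Finset.Icc 1 (i-1))) j) p := by
    rw [cc_eq_SumC, SumC, SumC, map_sum]
    refine Finset.sum_congr rfl fun j _ => ?_
    rw [map_mul, sAut_cvar i hi]
    congr 1
    rw [hNT_negcoe, ringHom_Eaux (sAut i) (Equiv.swap i (i+1)) (sAut_negT i hi),
      swap_image_Icc_eq i hi]
  have hcc1 : cc (-(i:ℤ)+1) (p-1)
      = SumC (fun j => if j = 0 then 0 else Eaux (Finset.Icc 1 (i-1)) (j-1)) p := by
    rw [cc_eq_SumC, ← SumC_shift]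
    refine SumC_congr (fun j => ?_) p
    cases j with
    | zero => rfl
    | succ j' =>
      simp only [if_neg (Nat.succ_ne_zero _), Nat.add_sub_cancel]
      have : (-(i:ℤ)+1) = -((i-1 : ℕ) : ℤ) := by omega
      rw [this, hNT_negcoe]
  rw [himg, hcc1, cc_eq_SumC]
  refine SumC_linear _ _ _ _ (fun j => ?_) p
  have hins1 : Finset.Icc 1 i = insert i (Finset.Icc 1 (i-1)) := Icc_succ_insert i hi
  have hmem1 : i ∉ Finset.Icc 1 (i-1) := not_mem_Icc_pred i
  have hmem2 : i+1 ∉ Finset.Icc 1 (i-1) := by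
    simp only [Finset.mem_Icc]; omega
  cases j with
  | zero =>
    rw [hNT_negcoe]
    simp
  | succ j' =>
    rw [hNT_negcoe, if_neg (Nat.succ_ne_zero _), Nat.add_sub_cancel]
    have e1 : Eaux (Finset.Icc 1 i) (j'+1)
        = Eaux (Finset.Icc 1 (i-1)) (j'+1) + negT i * Eaux (Finset.Icc 1 (i-1)) j' := by
      rw [hins1, Eaux_insert hmem1 j']
    have e2 : Eaux (insert (i+1) (Finset.Icc 1 (i-1))) (j'+1)
        = Eaux (Finset.Icc 1 (i-1)) (j'+1) + negT (i+1) * Eaux (Finset.Icc 1 (i-1)) j' :=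
      Eaux_insert hmem2 j'
    rw [dden_eq i hi]
    linear_combination e1 - e2

-- ### s₀ theory

lemma sImage_inr (i m : ℕ) : sImage i (Sum.inr m)
    = if i = 0 then (if m = 1 then negT 1 else MvPolynomial.X (Sum.inr m))
      else if m = i then MvPolynomial.X (Sum.inr (i+1))
      else if m = i+1 then MvPolynomial.X (Sum.inr i)
      else MvPolynomial.X (Sum.inr m) := rfl

lemma sImage_inl (i p : ℕ) : sImage i (Sum.inl p)
    = if i = 0 then
        (if p = 0 then MvPolynomial.X (Sum.inl 0) else
          cvar (p:ℤ) + 2 * ∑ j ∈ Finset.Icc 1 p, (negT 1)^j * cvar ((p:ℤ) - (j:ℤ)))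
      else MvPolynomial.X (Sum.inl p) := rfl

lemma s0_negT1 : sAut 0 (negT 1) = - negT 1 := by
  rw [negT, map_neg, sAut_X, sImage_inr, if_pos rfl, if_pos rfl, negT]

lemma s0_negT (l : ℕ) (hl : l ≠ 1) : sAut 0 (negT l) = negT l := by
  rw [negT, map_neg, sAut_X, sImage_inr, if_pos rfl, if_neg hl]

lemma hNT_one (j : ℕ) : hNT 1 (j:ℤ) = (negT 1)^j := by
  have := hNT_coe 1 j
  rw [Nat.cast_one] at this
  rw [this, Finset.Icc_self, Haux, Finset.sym_singleton, Finset.sum_singleton,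
    Sym.coe_replicate, Multiset.map_replicate, Multiset.prod_replicate]

lemma range_succ_eq_insert_Icc (n : ℕ) : Finset.range (n+1) = insert 0 (Finset.Icc 1 n) := by
  ext x
  simp only [Finset.mem_range, Finset.mem_insert, Finset.mem_Icc]
  omega

lemma cc_one_expand (n : ℕ) :
    cc 1 (n:ℤ) = cvar (n:ℤ)
      + ∑ j ∈ Finset.Icc 1 n, (negT 1)^j * cvar ((n:ℤ) - (j:ℤ)) := by
  rw [cc_eq_SumC, SumC, Int.toNat_natCast, range_succ_eq_insert_Icc,
    Finset.sum_insert (by simp)]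
  simp only [hNT_one]
  congr 1
  · simp
  · exact Finset.sum_congr rfl fun j _ => mul_comm _ _

lemma s0_cvar (p : ℤ) : sAut 0 (cvar p) = 2 * cc 1 p - cvar p := by
  rcases lt_trichotomy p 0 with h | rfl | h
  · rw [cvar_neg h, cc_nonpos h, map_zero, mul_zero, sub_zero]
  · rw [cvar_zero, cc_zero, map_one]; ring
  · obtain ⟨n, rfl⟩ : ∃ n : ℕ, p = (n:ℤ) := ⟨p.toNat, by omega⟩
    rw [cvar_coe n (by omega), sAut_X, sImage_inl, if_pos rfl, if_neg (by omega : n ≠ 0),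
      cc_one_expand n, cvar_coe n (by omega)]
    ring

lemma cc_one_rec (p : ℤ) : cc 1 p = cvar p + negT 1 * cc 1 (p-1) := by
  have h := cc_rec_pos 1 le_rfl p
  rw [Nat.cast_one] at h
  norm_num at h
  rw [cc_zero_left] at h
  exact h

lemma s0_cc_one_aux : ∀ n : ℕ, ∀ p : ℤ, p.toNat = n → sAut 0 (cc 1 p) = cc 1 p := by
  intro n
  induction n with
  | zero =>
    intro p hn
    rcases lt_or_ge p 0 with h | h
    · rw [cc_nonpos h, map_zero]
    · have : p = 0 := by omega
      subst this; rw [cc_zero, map_one]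
  | succ n ih =>
    intro p hn
    have hrec := cc_one_rec p
    calc sAut 0 (cc 1 p)
        = sAut 0 (cvar p) + sAut 0 (negT 1) * sAut 0 (cc 1 (p-1)) := by
          rw [hrec, map_add, map_mul]
      _ = (2 * cc 1 p - cvar p) + (- negT 1) * cc 1 (p-1) := by
          rw [s0_cvar, s0_negT1, ih (p-1) (by omega)]
      _ = cc 1 p := by linear_combination hrec

lemma s0_cc_one (p : ℤ) : sAut 0 (cc 1 p) = cc 1 p := s0_cc_one_aux p.toNat p rfl

lemma s0_cc_pos (r : ℕ) : ∀ p : ℤ, sAut 0 (cc ((r+1:ℕ):ℤ) p) = cc ((r+1:ℕ):ℤ) p := by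
  induction r with
  | zero => intro p; simpa using s0_cc_one p
  | succ r ihr =>
    suffices h : ∀ n : ℕ, ∀ p : ℤ, p.toNat = n → sAut 0 (cc ((r+1+1:ℕ):ℤ) p) = cc ((r+1+1:ℕ):ℤ) p by
      exact fun p => h p.toNat p rfl
    intro n
    induction n with
    | zero =>
      intro p hn
      rcases lt_or_ge p 0 with h | h
      · rw [cc_nonpos h, map_zero]
      · have : p = 0 := by omega
        subst this; rw [cc_zero, map_one]
    | succ n ih =>
      intro p hn
      have hrec := cc_rec_pos (r+2) (by omega) p
      rw [show ((r+2:ℕ):ℤ) - 1 = ((r+1:ℕ):ℤ) by push_cast; ring] at hrec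
      calc sAut 0 (cc ((r+2:ℕ):ℤ) p)
          = sAut 0 (cc ((r+1:ℕ):ℤ) p)
            + sAut 0 (negT (r+2)) * sAut 0 (cc ((r+2:ℕ):ℤ) (p-1)) := by
            rw [hrec, map_add, map_mul]
        _ = cc ((r+1:ℕ):ℤ) p + negT (r+2) * cc ((r+2:ℕ):ℤ) (p-1) := by
            rw [ihr p, s0_negT _ (by omega), ih (p-1) (by omega)]
        _ = cc ((r+2:ℕ):ℤ) p := hrec.symm

lemma s0_cc_negone (p : ℤ) : sAut 0 (cc (-1) p) = cc (-1) p := by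
  have hrec := cc_rec_neg 1 le_rfl p
  rw [Nat.cast_one] at hrec
  norm_num at hrec
  rw [cc_zero_left, cc_zero_left] at hrec
  have h1 := cc_one_rec p
  calc sAut 0 (cc (-1) p)
      = sAut 0 (cvar p) + sAut 0 (negT 1) * sAut 0 (cvar (p-1)) := by
        rw [hrec, map_add, map_mul]
    _ = (2 * cc 1 p - cvar p) + (- negT 1) * (2 * cc 1 (p-1) - cvar (p-1)) := by
        rw [s0_cvar, s0_negT1, s0_cvar]
    _ = cc (-1) p := by linear_combination 2 * h1 - hrec

lemma s0_cc_neg (m : ℕ) : ∀ p : ℤ, sAut 0 (cc (-((m+1:ℕ):ℤ)) p) = cc (-((m+1:ℕ):ℤ)) p := by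
  induction m with
  | zero => intro p; simpa using s0_cc_negone p
  | succ m ihm =>
    intro p
    have hrec := cc_rec_neg (m+2) (by omega) p
    rw [show -((m+2:ℕ):ℤ) + 1 = -((m+1:ℕ):ℤ) by push_cast; ring] at hrec
    calc sAut 0 (cc (-((m+2:ℕ):ℤ)) p)
        = sAut 0 (cc (-((m+1:ℕ):ℤ)) p)
          + sAut 0 (negT (m+2)) * sAut 0 (cc (-((m+1:ℕ):ℤ)) (p-1)) := by
          rw [hrec, map_add, map_mul]
      _ = cc (-((m+1:ℕ):ℤ)) p + negT (m+2) * cc (-((m+1:ℕ):ℤ)) (p-1) := by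
          rw [ihm p, s0_negT _ (by omega), ihm (p-1)]
      _ = cc (-((m+2:ℕ):ℤ)) p := hrec.symm

lemma s0_cc (r p : ℤ) (h : r ≠ 0) : sAut 0 (cc r p) = cc r p := by
  rcases lt_or_ge 0 r with hr | hr
  · obtain ⟨m, rfl⟩ : ∃ m : ℕ, r = ((m+1:ℕ):ℤ) := ⟨(r-1).toNat, by omega⟩
    exact s0_cc_pos m p
  · obtain ⟨m, rfl⟩ : ∃ m : ℕ, r = -((m+1:ℕ):ℤ) := ⟨(-r-1).toNat, by omega⟩
    exact s0_cc_neg m p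

lemma dden_zero_eq : dden 0 = -2 * negT 1 := by
  rw [dden, if_pos rfl, negT]
  ring

lemma delta_zero (p : ℤ) : cc 0 p = sAut 0 (cc 0 p) + dden 0 * cc 1 (p-1) := by
  rw [cc_zero_left, s0_cvar, dden_zero_eq]
  linear_combination -2 * cc_one_rec p

-- ### ddiff characterization

lemma dden_ne_zero (i : ℕ) : dden i ≠ 0 := by
  rcases Nat.eq_zero_or_pos i with rfl | hi
  · rw [dden, if_pos rfl]
    exact mul_ne_zero two_ne_zero (MvPolynomial.X_ne_zero _)
  · rw [dden, if_neg (by omega)]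
    intro h
    have h2 : (MvPolynomial.X (Sum.inr (i+1)) : P) = MvPolynomial.X (Sum.inr i) :=
      sub_eq_zero.1 h
    have := MvPolynomial.X_injective h2
    simp only [Sum.inr.injEq] at this
    omega

lemma ddiff_eq (i : ℕ) (f g : P) (h : f - sAut i f = dden i * g) : ddiff i f = g := by
  have hex : ∃ g : P, f - sAut i f = dden i * g := ⟨g, h⟩
  rw [ddiff, dif_pos hex]
  have hs := hex.choose_spec
  exact mul_left_cancel₀ (dden_ne_zero i) (hs.symm.trans h)

lemma ddiff_invariant (i : ℕ) (f : P) (h : sAut i f = f) : ddiff i f = 0 := by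
  refine ddiff_eq i f 0 ?_
  rw [h, sub_self, mul_zero]

end Stmt18Aux

open Stmt18Aux

theorem stmt18 :
    (∀ (i : ℕ) (r p : ℤ),
      ((r = (i:ℤ) ∨ r = -(i:ℤ)) → ddiff i (cc r p) = cc (r + 1) (p - 1)) ∧
      ((r ≠ (i:ℤ) ∧ r ≠ -(i:ℤ)) → ddiff i (cc r p) = 0)) ∧
    (∀ (i : ℕ), 1 ≤ i → ∀ p q : ℤ,
      ddiff i (cc (-(i:ℤ)) p * cc (i:ℤ) q) =
        cc (-(i:ℤ) + 1) (p - 1) * cc ((i:ℤ) + 1) q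
          + cc (-(i:ℤ) + 1) p * cc ((i:ℤ) + 1) (q - 1)) := by
  constructor
  · intro i r p
    constructor
    · rintro (rfl | rfl)
      · rcases Nat.eq_zero_or_pos i with rfl | hi
        · refine ddiff_eq 0 _ _ ?_
          have h := delta_zero p
          push_cast
          linear_combination h
        · refine ddiff_eq i _ _ ?_
          linear_combination delta_pos i hi p
      · rcases Nat.eq_zero_or_pos i with rfl | hi
        · refine ddiff_eq 0 _ _ ?_
          have h := delta_zero p
          push_cast
          simp only [neg_zero]
          linear_combination h
        · refine ddiff_eq i _ _ ?_
          linear_combination delta_neg i hi p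
    · rintro ⟨h1, h2⟩
      rcases Nat.eq_zero_or_pos i with rfl | hi
      · exact ddiff_invariant 0 _ (s0_cc r p (by simpa using h1))
      · exact ddiff_invariant i _ (sAut_cc_invariant i hi r p h1 h2)
  · intro i hi p q
    have hA := delta_neg i hi p
    have hB := delta_pos i hi q
    have hrec1 := cc_rec_pos (i+1) (by omega) q
    rw [show ((i+1:ℕ):ℤ) - 1 = (i:ℤ) by push_cast; ring] at hrec1
    rw [show ((i+1:ℕ):ℤ) = (i:ℤ) + 1 by push_cast; ring] at hrec1
    have hrec2 := cc_rec_neg i hi p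
    rw [dden_eq i hi] at hA hB
    refine ddiff_eq i _ _ ?_
    rw [map_mul, dden_eq i hi]
    linear_combination (cc (i:ℤ) q - (negT i - negT (i+1)) * cc ((i:ℤ)+1) (q-1)) * hA
      + (sAut i (cc (-(i:ℤ)) p)) * hB
      - ((negT i - negT (i+1)) * cc (-(i:ℤ)+1) (p-1)) * hrec1
      + ((negT i - negT (i+1)) * cc ((i:ℤ)+1) (q-1)) * hrec2


end
end
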